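/- arXiv:1904.00075 — 4 statements merged into one kernel-verified Lean document; each statement's English description precedes it below -/
import Mathlib

section
/- For any compact set $K \subset \mathbb{R}$ there exists $L_K > 0$ such that $\sup_{t\in[0,1]} |v(t,y) - v(t,x)| \le L_K |y - x|$ for all $x, y \in K$; one can take $L_K = c_1 \max_{x\in K} e^{|x|}$ with $c_1 = \mathsf{E}[\sup_{0\le s\le 1} e^{|W_s|}]$. -/
open MeasureTheory ProbabilityTheory Real Set Filter
open scoped NNReal ENNReal

noncomputable section

/-- A standard one-dimensional Brownian motion on `[0, ∞)`. -/
structure IsBrownianMotion {Ω : Type*} [MeasurableSpace Ω] (μ : Measure Ω)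
    (W : ℝ → Ω → ℝ) : Prop where
  isProb : IsProbabilityMeasure μ
  meas : ∀ t : ℝ, Measurable (W t)
  init : ∀ ω, W 0 ω = 0
  cont : ∀ ω, Continuous fun t => W t ω
  incr_law : ∀ s t : ℝ, 0 ≤ s → s ≤ t →
    Measure.map (fun ω => W t ω - W s ω) μ = gaussianReal 0 (Real.toNNReal (t - s))
  indep_incr : ∀ n : ℕ, ∀ u : ℕ → ℝ, Monotone u → 0 ≤ u 0 →
    iIndepFun
      (fun i : Fin n => fun ω => W (u (i + 1)) ω - W (u i) ω) μ

variable {Ω : Type*} [MeasurableSpace Ω]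

/-- The Wiener integral `∫_t^s dW_u/(1-u)`, defined pathwise via integration by parts. -/
def bridgeInt (W : ℝ → Ω → ℝ) (t s : ℝ) (ω : Ω) : ℝ :=
  W s ω / (1 - s) - W t ω / (1 - t) - ∫ u in t..s, W u ω / (1 - u) ^ 2

/-- The Brownian bridge started from `x` at time `t` and pinned at `0` at time `1`:
`X^{t,x}_s = (1-s) (x/(1-t) + ∫_t^s dW_u/(1-u))`. -/
def bridge (W : ℝ → Ω → ℝ) (t x s : ℝ) (ω : Ω) : ℝ :=
  (1 - s) * (x / (1 - t) + bridgeInt W t s ω)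

/-- The process `Z^{t,x}_s = ((1-s)/(1-t)) x + sqrt((1-s)/(1-t)) W_{s-t}`. -/
def Zproc (W : ℝ → Ω → ℝ) (t x s : ℝ) (ω : Ω) : ℝ :=
  (1 - s) / (1 - t) * x + Real.sqrt ((1 - s) / (1 - t)) * W (s - t) ω

/-- The natural filtration of `W`, as a σ-algebra at time `s`. -/
def natSigma (W : ℝ → Ω → ℝ) (s : ℝ) : MeasurableSpace Ω :=
  ⨆ u ∈ Set.Iic s, MeasurableSpace.comap (W u) inferInstance

/-- `τ` is a stopping time of the natural filtration of `W`. -/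
def IsStoppingTimeFor (W : ℝ → Ω → ℝ) (τ : Ω → ℝ) : Prop :=
  ∀ s : ℝ, MeasurableSet[natSigma W s] {ω | τ ω ≤ s}

/-- The value function `v(t,x) = sup_{0 ≤ τ ≤ 1-t} E[exp(Z^{t,x}_{t+τ})]`, the supremum being
taken over stopping times `τ` of the (time-shifted) natural filtration of `W`. -/
def value (μ : Measure Ω) (W : ℝ → Ω → ℝ) (t x : ℝ) : ℝ :=
  sSup {r : ℝ | ∃ τ : Ω → ℝ, IsStoppingTimeFor W (fun ω => t + τ ω) ∧
    (∀ ω, τ ω ∈ Set.Icc 0 (1 - t)) ∧ r = ∫ ω, Real.exp (Zproc W t x (t + τ ω) ω) ∂μ}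

/-- The optimal stopping boundary `b(t) = sup{x : v(t,x) > e^x}`, with `b(1) = 0`. -/
def boundary (μ : Measure Ω) (W : ℝ → Ω → ℝ) (t : ℝ) : ℝ :=
  if t = 1 then 0 else sSup {x : ℝ | Real.exp x < value μ W t x}

/-- `S_1 = sup_{0 ≤ s ≤ 1} |W_s|`. -/
def supAbsW (W : ℝ → Ω → ℝ) (ω : Ω) : ℝ := ⨆ s : Set.Icc (0:ℝ) 1, |W s ω|



lemma gaussianReal_Ici_le {v : ℝ≥0} (hv : v ≠ 0) {b : ℝ} (hb : 0 ≤ b) :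
    gaussianReal 0 v (Ici b) ≤ ENNReal.ofReal (rexp (-b^2/(2*v))) := by
  have hv0 : (0:ℝ) < (v:ℝ) := lt_of_le_of_ne v.coe_nonneg (by exact_mod_cast hv.symm)
  rw [gaussianReal_apply 0 hv (Ici b)]
  have hmap : (volume : Measure ℝ).map (· + b) = volume :=
    map_add_right_eq_self volume b
  have h1 : ∫⁻ x in Ici b, gaussianPDF 0 v x
      = ∫⁻ y in Ici (0:ℝ), gaussianPDF 0 v (y + b) := by
    conv_lhs => rw [← hmap]
    rw [setLIntegral_map measurableSet_Ici (measurable_gaussianPDF 0 v)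
      (measurable_add_const b)]
    congr 1
    ext y
    simp [le_add_iff_nonneg_left]
  rw [h1]
  have h2 : ∀ y ∈ Ici (0:ℝ), gaussianPDF 0 v (y + b)
      ≤ ENNReal.ofReal (rexp (-b^2/(2*v))) * gaussianPDF 0 v y := by
    intro y hy
    simp only [mem_Ici] at hy
    rw [gaussianPDF, gaussianPDF, ← ENNReal.ofReal_mul (by positivity)]
    apply ENNReal.ofReal_le_ofReal
    have hpdf : gaussianPDFReal 0 v (y + b)
        ≤ rexp (-b^2/(2*v)) * gaussianPDFReal 0 v y := by
      unfold gaussianPDFReal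
      rw [mul_left_comm, sub_zero, sub_zero]
      apply mul_le_mul_of_nonneg_left _ (by positivity)
      rw [← Real.exp_add]
      apply Real.exp_le_exp.2
      have hvv : (0:ℝ) < 2 * v := by linarith
      rw [← add_div, div_le_div_iff₀ hvv hvv]
      nlinarith [mul_nonneg hy hb]
    exact hpdf
  calc ∫⁻ y in Ici (0:ℝ), gaussianPDF 0 v (y + b)
      ≤ ∫⁻ y in Ici (0:ℝ), ENNReal.ofReal (rexp (-b^2/(2*v))) * gaussianPDF 0 v y :=
        setLIntegral_mono' measurableSet_Ici h2
    _ = ENNReal.ofReal (rexp (-b^2/(2*v))) * ∫⁻ y in Ici (0:ℝ), gaussianPDF 0 v y := by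
        rw [lintegral_const_mul _ (measurable_gaussianPDF 0 v)]
    _ ≤ ENNReal.ofReal (rexp (-b^2/(2*v))) * 1 := by
        apply mul_le_mul_right
        rw [← lintegral_gaussianPDF_eq_one 0 hv]
        exact setLIntegral_le_lintegral _ _
    _ = _ := mul_one _

lemma gaussianReal_abs_le {v : ℝ≥0} (hv1 : v ≤ 1) {b : ℝ} (hb : 1 ≤ b) :
    gaussianReal 0 v {x : ℝ | b ≤ |x|} ≤ ENNReal.ofReal (2 * rexp (-b^2/2)) := by
  have hb0 : (0:ℝ) < b := lt_of_lt_of_le one_pos hb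
  by_cases hv : v = 0
  · subst hv
    rw [gaussianReal_zero_var]
    have hA : MeasurableSet {x : ℝ | b ≤ |x|} := measurable_abs measurableSet_Ici
    rw [Measure.dirac_apply' _ hA]
    have h0 : (0:ℝ) ∉ {x : ℝ | b ≤ |x|} := by
      simp only [mem_setOf_eq, abs_zero, not_le]; linarith
    simp [Set.indicator_of_notMem h0]
  · have hv0 : (0:ℝ) < (v:ℝ) := lt_of_le_of_ne v.coe_nonneg (by exact_mod_cast Ne.symm hv)
    have key : gaussianReal 0 v (Iic (-b)) ≤ gaussianReal 0 v (Ici b) := by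
      have hmap := gaussianReal_map_const_mul (μ := 0) (v := v) (-1)
      have e1 : gaussianReal ((-1:ℝ) * 0) (NNReal.mk ((-1:ℝ)^2) (sq_nonneg _) * v) = gaussianReal 0 v := by
        congr 1
        · norm_num
        · ext; push_cast; norm_num
      rw [e1] at hmap
      calc gaussianReal 0 v (Iic (-b))
          = (Measure.map (fun x => (-1:ℝ) * x) (gaussianReal 0 v)) (Iic (-b)) := by rw [hmap]
        _ = gaussianReal 0 v ((fun x => (-1:ℝ) * x) ⁻¹' Iic (-b)) :=
            Measure.map_apply (measurable_id'.const_mul (-1)) measurableSet_Iic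
        _ ≤ gaussianReal 0 v (Ici b) := by
            apply measure_mono
            intro x hx
            simp only [mem_preimage, mem_Iic] at hx
            simp only [mem_Ici]
            linarith
    have hsub : {x : ℝ | b ≤ |x|} ⊆ Iic (-b) ∪ Ici b := by
      intro x hx
      simp only [mem_setOf_eq] at hx
      rcases abs_cases x with ⟨h1, _⟩ | ⟨h1, _⟩
      · right; rw [mem_Ici]; linarith
      · left; rw [mem_Iic]; linarith
    have hexp : rexp (-b^2/(2*(v:ℝ))) ≤ rexp (-b^2/2) := by
      apply Real.exp_le_exp.2
      rw [neg_div, neg_div, neg_le_neg_iff, div_le_div_iff₀ (by norm_num) (by linarith)]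
      nlinarith [mul_le_mul_of_nonneg_left (show (v:ℝ) ≤ 1 from hv1) (sq_nonneg b)]
    calc gaussianReal 0 v {x : ℝ | b ≤ |x|}
        ≤ gaussianReal 0 v (Iic (-b) ∪ Ici b) := measure_mono hsub
      _ ≤ gaussianReal 0 v (Iic (-b)) + gaussianReal 0 v (Ici b) := measure_union_le _ _
      _ ≤ ENNReal.ofReal (rexp (-b^2/(2*v))) + ENNReal.ofReal (rexp (-b^2/(2*v))) := by
          gcongr
          · exact key.trans (gaussianReal_Ici_le hv (le_of_lt hb0))
          · exact gaussianReal_Ici_le hv (le_of_lt hb0)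
      _ ≤ _ := by
          rw [← ENNReal.ofReal_add (by positivity) (by positivity)]
          apply ENNReal.ofReal_le_ofReal
          linarith

variable {μ : Measure Ω} {W : ℝ → Ω → ℝ}

lemma bddAbove_absW (hW : IsBrownianMotion μ W) (ω : Ω) :
    BddAbove (range fun s : Set.Icc (0:ℝ) 1 => |W s ω|) := by
  have hc : ContinuousOn (fun s : ℝ => |W s ω|) (Icc 0 1) :=
    ((hW.cont ω).abs).continuousOn
  have h := (isCompact_Icc (a := (0:ℝ)) (b := 1)).bddAbove_image hc
  have : (range fun s : Set.Icc (0:ℝ) 1 => |W s ω|) = (fun s : ℝ => |W s ω|) '' Icc 0 1 := by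
    ext r; simp [Set.mem_image, Subtype.exists]
  rwa [this]

lemma abs_le_supAbsW (hW : IsBrownianMotion μ W) (ω : Ω) {s : ℝ} (hs : s ∈ Icc (0:ℝ) 1) :
    |W s ω| ≤ supAbsW W ω :=
  le_ciSup (bddAbove_absW hW ω) (⟨s, hs⟩ : Icc (0:ℝ) 1)

lemma supAbsW_nonneg (hW : IsBrownianMotion μ W) (ω : Ω) : 0 ≤ supAbsW W ω := by
  have := abs_le_supAbsW hW ω (s := 0) (by simp)
  simpa [hW.init ω] using this


lemma supAbsW_eq (hW : IsBrownianMotion μ W) (ω : Ω) :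
    supAbsW W ω = ⨆ n : ℕ, |W (TopologicalSpace.denseSeq (Set.Icc (0:ℝ) 1) n) ω| := by
  set e := TopologicalSpace.denseSeq (Set.Icc (0:ℝ) 1)
  have hbdd := bddAbove_absW hW ω
  have hbdd2 : BddAbove (range fun n : ℕ => |W (e n) ω|) := by
    refine hbdd.mono ?_
    rintro r ⟨n, rfl⟩
    exact ⟨e n, rfl⟩
  refine le_antisymm (ciSup_le fun s => ?_) (ciSup_le fun n => le_ciSup hbdd (e n))
  set F : Set.Icc (0:ℝ) 1 → ℝ := fun s => |W s ω|
  have hF : Continuous F := ((hW.cont ω).comp continuous_subtype_val).abs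
  have hdense : s ∈ closure (range e) := by
    rw [(TopologicalSpace.denseRange_denseSeq _).closure_range]; trivial
  have h1 : F s ∈ closure (F '' range e) :=
    (image_closure_subset_closure_image hF) ⟨s, hdense, rfl⟩
  have h2 : closure (F '' range e) ⊆ Iic (⨆ n : ℕ, |W (e n) ω|) := by
    refine closure_minimal ?_ isClosed_Iic
    rintro r ⟨t, ⟨n, rfl⟩, rfl⟩
    exact le_ciSup hbdd2 n
  exact h2 h1

lemma measurable_supAbsW (hW : IsBrownianMotion μ W) : Measurable (supAbsW W) := by
  have : supAbsW W = fun ω => ⨆ n : ℕ, |W (TopologicalSpace.denseSeq (Set.Icc (0:ℝ) 1) n) ω| :=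
    funext fun ω => supAbsW_eq hW ω
  rw [this]
  exact Measurable.iSup fun n => (hW.meas _).abs


lemma tail_incr (hW : IsBrownianMotion μ W) {s t : ℝ} (hs : 0 ≤ s) (hst : s ≤ t)
    (h1 : t - s ≤ 1) {b : ℝ} (hb : 1 ≤ b) :
    μ {ω | b ≤ |W t ω - W s ω|} ≤ ENNReal.ofReal (2 * rexp (-b^2/2)) := by
  have hA : MeasurableSet {x : ℝ | b ≤ |x|} := measurable_abs measurableSet_Ici
  have hmeas : Measurable fun ω => W t ω - W s ω := (hW.meas t).sub (hW.meas s)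
  have heq : {ω | b ≤ |W t ω - W s ω|} = (fun ω => W t ω - W s ω) ⁻¹' {x | b ≤ |x|} := rfl
  rw [heq, ← Measure.map_apply hmeas hA, hW.incr_law s t hs hst]
  refine gaussianReal_abs_le ?_ hb
  rw [show (1 : ℝ≥0) = Real.toNNReal 1 from (Real.toNNReal_one).symm]
  exact Real.toNNReal_le_toNNReal h1

lemma etemadi_key (hW : IsBrownianMotion μ W) {N : ℕ} {u : ℕ → ℝ} (hu : Monotone u)
    (h0 : u 0 = 0) (h1 : u N = 1) {a : ℝ} (ha : 1 ≤ a) {k : ℕ} (hk : k ≤ N) :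
    μ ({ω | (∀ j < k, |W (u j) ω| < 3*a) ∧ 3*a ≤ |W (u k) ω|}
        ∩ {ω | 2*a ≤ |W 1 ω - W (u k) ω|})
      = μ {ω | (∀ j < k, |W (u j) ω| < 3*a) ∧ 3*a ≤ |W (u k) ω|}
        * μ {ω | 2*a ≤ |W 1 ω - W (u k) ω|} := by
  classical
  set X : Fin N → Ω → ℝ := fun i ω => W (u ((i:ℕ)+1)) ω - W (u (i:ℕ)) ω with hX
  have hXmeas : ∀ i, Measurable (X i) := fun i => (hW.meas _).sub (hW.meas _)
  have hindep := hW.indep_incr N u hu (le_of_eq h0.symm)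
  -- telescoping
  have htel : ∀ j ≤ N, ∀ ω, (∑ i ∈ Finset.univ.filter (fun i : Fin N => (i:ℕ) < j),
      X i ω) = W (u j) ω := by
    intro j hj ω
    have hbij : (∑ i ∈ Finset.univ.filter (fun i : Fin N => (i:ℕ) < j), X i ω)
        = ∑ n ∈ Finset.range j, (W (u (n+1)) ω - W (u n) ω) := by
      refine Finset.sum_bij' (fun i _ => (i:ℕ)) (fun n hn => ⟨n, ?_⟩) ?_ ?_ ?_ ?_ ?_
      · exact lt_of_lt_of_le (Finset.mem_range.1 hn) hj
      · intro i hi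
        simp only [Finset.mem_filter] at hi
        exact Finset.mem_range.2 hi.2
      · intro n hn
        simp only [Finset.mem_filter, Finset.mem_univ, true_and]
        exact Finset.mem_range.1 hn
      · intro i hi; rfl
      · intro n hn; rfl
      · intro i hi; rfl
    rw [hbij, Finset.sum_range_sub (fun n => W (u n) ω), h0, hW.init ω, sub_zero]
  rcases eq_or_lt_of_le hk with rfl | hkN
  · -- k = N : the second event is empty
    have hempty : {ω | 2*a ≤ |W 1 ω - W (u k) ω|} = ∅ := by
      ext ω
      simp only [mem_setOf_eq, mem_empty_iff_false, iff_false, not_le, h1, sub_self, abs_zero]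
      linarith
    rw [hempty]
    simp
  · set S : Finset (Fin N) := Finset.univ.filter (fun i => (i:ℕ) < k) with hS
    set T : Finset (Fin N) := Finset.univ.filter (fun i => k ≤ (i:ℕ)) with hT
    have hST : Disjoint S T := by
      rw [Finset.disjoint_left]
      intro i hi hi'
      simp only [hS, hT, Finset.mem_filter] at hi hi'
      omega
    have hIF := hindep.indepFun_finset S T hST hXmeas
    -- the sums over S
    have hsumS : ∀ j ≤ k, ∀ ω,
        (∑ i : S, if ((i : Fin N):ℕ) < j then X i ω else 0) = W (u j) ω := by
      intro j hj ω
      rw [Finset.sum_coe_sort S (fun i : Fin N => if (i:ℕ) < j then X i ω else 0)]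
      rw [← Finset.sum_filter]
      rw [hS, Finset.filter_filter]
      have hfeq : (Finset.univ.filter fun i : Fin N => (i:ℕ) < k ∧ (i:ℕ) < j)
          = Finset.univ.filter (fun i : Fin N => (i:ℕ) < j) :=
        Finset.filter_congr (fun i _ => by constructor
                                           · rintro ⟨_, h⟩; exact h
                                           · intro h; exact ⟨lt_of_lt_of_le h hj, h⟩)
      rw [hfeq]
      exact htel j (le_trans hj hk) ω
    -- the sum over T
    have hsumT : ∀ ω, (∑ i : T, X i ω) = W 1 ω - W (u k) ω := by
      intro ω
      rw [Finset.sum_coe_sort T (fun i : Fin N => X i ω)]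
      have hsplit := Finset.sum_filter_add_sum_filter_not Finset.univ
        (fun i : Fin N => (i:ℕ) < k) (fun i => X i ω)
      have hTeq : Finset.univ.filter (fun i : Fin N => ¬ (i:ℕ) < k) = T := by
        refine Finset.filter_congr (fun i _ => ?_)
        simp [not_lt]
      rw [hTeq] at hsplit
      have huniv : (∑ i : Fin N, X i ω) = W (u N) ω := by
        have := htel N le_rfl ω
        rwa [Finset.filter_true_of_mem (fun i _ => i.isLt)] at this
      have hSsum := htel k hk ω
      rw [h1] at huniv
      have : (∑ i ∈ S, X i ω) + (∑ i ∈ T, X i ω) = W 1 ω := by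
        rw [← huniv]; exact hsplit
      rw [← hSsum]
      linarith [this]
    -- measurable sets in the product spaces
    set M₁ : Set ({x // x ∈ S} → ℝ) :=
      {v | (∀ j < k, |∑ i : S, if ((i : Fin N):ℕ) < j then v i else 0| < 3*a)
        ∧ 3*a ≤ |∑ i : S, if ((i : Fin N):ℕ) < k then v i else 0|} with hM₁
    set M₂ : Set ({x // x ∈ T} → ℝ) := {v | 2*a ≤ |∑ i : T, v i|} with hM₂
    have hmsum : ∀ (γ : Finset (Fin N)) (j : ℕ),
        Measurable (fun v : {x // x ∈ γ} → ℝ => ∑ i : γ, if ((i : Fin N):ℕ) < j then v i else 0) := by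
      intro γ j
      refine Finset.measurable_sum Finset.univ (fun i _ => ?_)
      by_cases hij : ((i : Fin N):ℕ) < j
      · simp only [if_pos hij]; exact measurable_pi_apply i
      · simp only [if_neg hij]; exact measurable_const
    have hM₁meas : MeasurableSet M₁ := by
      have h2 : MeasurableSet {v : {x // x ∈ S} → ℝ
          | 3*a ≤ |∑ i : S, if ((i : Fin N):ℕ) < k then v i else 0|} :=
        measurableSet_le measurable_const (hmsum S k).abs
      have h3 : MeasurableSet {v : {x // x ∈ S} → ℝ
          | ∀ j < k, |∑ i : S, if ((i : Fin N):ℕ) < j then v i else 0| < 3*a} := by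
        have he : {v : {x // x ∈ S} → ℝ
            | ∀ j < k, |∑ i : S, if ((i : Fin N):ℕ) < j then v i else 0| < 3*a}
            = ⋂ j ∈ Finset.range k, {v | |∑ i : S, if ((i : Fin N):ℕ) < j then v i else 0| < 3*a} := by
          ext v; simp [Finset.mem_range]
        rw [he]
        exact (Finset.range k).measurableSet_biInter
          (fun j _ => measurableSet_lt (hmsum S j).abs measurable_const)
      have he2 : M₁ = _ ∩ _ := rfl
      exact h3.inter h2
    have hM₂meas : MeasurableSet M₂ := by
      have : Measurable (fun v : {x // x ∈ T} → ℝ => ∑ i : T, v i) :=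
        Finset.measurable_sum Finset.univ (fun i _ => measurable_pi_apply i)
      exact measurableSet_le measurable_const this.abs
    -- identification of the events as preimages
    have hpre₁ : {ω | (∀ j < k, |W (u j) ω| < 3*a) ∧ 3*a ≤ |W (u k) ω|}
        = (fun ω (i : S) => X i ω) ⁻¹' M₁ := by
      ext ω
      simp only [mem_setOf_eq, mem_preimage, hM₁]
      constructor
      · rintro ⟨hall, hlast⟩
        refine ⟨fun j hj => ?_, ?_⟩
        · rw [hsumS j (le_of_lt hj) ω]; exact hall j hj
        · rw [hsumS k le_rfl ω]; exact hlast
      · rintro ⟨hall, hlast⟩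
        refine ⟨fun j hj => ?_, ?_⟩
        · have := hall j hj; rwa [hsumS j (le_of_lt hj) ω] at this
        · rwa [hsumS k le_rfl ω] at hlast
    have hpre₂ : {ω | 2*a ≤ |W 1 ω - W (u k) ω|} = (fun ω (i : T) => X i ω) ⁻¹' M₂ := by
      ext ω
      simp only [mem_setOf_eq, mem_preimage, hM₂]
      rw [hsumT ω]
    rw [hpre₁, hpre₂]
    exact hIF.measure_inter_preimage_eq_mul M₁ M₂ hM₁meas hM₂meas

lemma etemadi (hW : IsBrownianMotion μ W) {N : ℕ} {u : ℕ → ℝ} (hu : Monotone u)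
    (h0 : u 0 = 0) (h1 : u N = 1) {a : ℝ} (ha : 1 ≤ a) :
    μ {ω | ∃ k ≤ N, 3*a ≤ |W (u k) ω|} ≤ 2 * μ {ω | a ≤ |W 1 ω|} := by
  classical
  haveI := hW.isProb
  set B : Set Ω := {ω | a ≤ |W 1 ω|} with hB
  have hBmeas : MeasurableSet B := measurableSet_le measurable_const (hW.meas 1).abs
  set A : ℕ → Set Ω := fun k => {ω | (∀ j < k, |W (u j) ω| < 3*a) ∧ 3*a ≤ |W (u k) ω|} with hA
  have hAmeas : ∀ k, MeasurableSet (A k) := by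
    intro k
    have h2 : MeasurableSet {ω | 3*a ≤ |W (u k) ω|} :=
      measurableSet_le measurable_const (hW.meas _).abs
    have h3 : MeasurableSet {ω | ∀ j < k, |W (u j) ω| < 3*a} := by
      have he : {ω | ∀ j < k, |W (u j) ω| < 3*a}
          = ⋂ j ∈ Finset.range k, {ω | |W (u j) ω| < 3*a} := by
        ext ω; simp [Finset.mem_range]
      rw [he]
      exact (Finset.range k).measurableSet_biInter
        (fun j _ => measurableSet_lt (hW.meas _).abs measurable_const)
    have he2 : A k = {ω | ∀ j < k, |W (u j) ω| < 3*a} ∩ {ω | 3*a ≤ |W (u k) ω|} := by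
      ext ω; simp only [hA, mem_setOf_eq, mem_inter_iff]
    rw [he2]; exact h3.inter h2
  -- pairwise disjoint
  have hdisj : ∀ k l : ℕ, k < l → Disjoint (A k) (A l) := by
    intro k l hkl
    rw [Set.disjoint_left]
    intro ω hk hl
    exact absurd hk.2 (not_le.2 (hl.1 k hkl))
  have hdisj' : (↑(Finset.range (N+1)) : Set ℕ).PairwiseDisjoint A := by
    intro k _ l _ hkl
    rcases lt_or_gt_of_ne hkl with h | h
    · exact hdisj k l h
    · exact (hdisj l k h).symm
  -- covering
  have hcover : {ω | ∃ k ≤ N, 3*a ≤ |W (u k) ω|} ⊆ ⋃ k ∈ Finset.range (N+1), A k := by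
    intro ω hω
    obtain ⟨k, hkN, hk⟩ := hω
    have hex : ∃ k, k ≤ N ∧ 3*a ≤ |W (u k) ω| := ⟨k, hkN, hk⟩
    have hm := Nat.find_spec hex
    refine Set.mem_biUnion (Finset.mem_range.2 (Nat.lt_succ_of_le hm.1)) ?_
    refine ⟨fun j hj => ?_, hm.2⟩
    by_contra hc
    exact Nat.find_min hex hj ⟨le_trans (le_of_lt hj) hm.1, not_lt.1 hc⟩
  set C : ℕ → Set Ω := fun k => {ω | 2*a ≤ |W 1 ω - W (u k) ω|} with hC
  have huk0 : ∀ k, 0 ≤ u k := fun k => h0 ▸ hu (Nat.zero_le k)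
  have huk1 : ∀ k, k ≤ N → u k ≤ 1 := fun k hk => h1 ▸ hu hk
  have hCsmall : ∀ k, k ≤ N → μ (C k) ≤ 2⁻¹ := by
    intro k hk
    have hb2 : (1:ℝ) ≤ 2*a := by linarith
    have ht := tail_incr hW (huk0 k) (huk1 k hk) (by linarith [huk0 k]) hb2
    refine le_trans ht ?_
    have h4 : (2:ℝ) ≤ rexp 1 := by linarith [Real.add_one_le_exp (1:ℝ)]
    have h5 : (4:ℝ) ≤ rexp 2 := by
      rw [show (2:ℝ) = 1 + 1 by norm_num, Real.exp_add]
      nlinarith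
    have h6 : rexp (-(2*a)^2/2) ≤ rexp (-2) := by
      apply Real.exp_le_exp.2
      nlinarith
    have h7 : rexp (-2) ≤ 4⁻¹ := by
      rw [Real.exp_neg]
      rw [inv_le_inv₀ (by linarith) (by norm_num)]
      exact h5
    calc ENNReal.ofReal (2 * rexp (-(2*a)^2/2)) ≤ ENNReal.ofReal 2⁻¹ := by
          apply ENNReal.ofReal_le_ofReal; nlinarith
      _ = 2⁻¹ := by
          rw [ENNReal.ofReal_inv_of_pos two_pos, ENNReal.ofReal_ofNat]
  have key : ∀ k ∈ Finset.range (N+1), μ (A k) ≤ 2 * μ (A k ∩ B) := by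
    intro k hk'
    have hk : k ≤ N := Nat.lt_succ_iff.1 (Finset.mem_range.1 hk')
    have hsplit : A k ⊆ (A k ∩ B) ∪ (A k ∩ C k) := by
      intro ω hω
      by_cases hb : ω ∈ B
      · exact Or.inl ⟨hω, hb⟩
      · refine Or.inr ⟨hω, ?_⟩
        simp only [hB, mem_setOf_eq, not_le] at hb
        simp only [hC, mem_setOf_eq]
        have h3 := hω.2
        have habs := abs_sub_abs_le_abs_sub (W (u k) ω) (W 1 ω)
        rw [abs_sub_comm] at habs
        linarith
    have hmul : μ (A k ∩ C k) = μ (A k) * μ (C k) := etemadi_key hW hu h0 h1 ha hk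
    have hstep : μ (A k) ≤ μ (A k ∩ B) + μ (A k) * 2⁻¹ := by
      calc μ (A k) ≤ μ ((A k ∩ B) ∪ (A k ∩ C k)) := measure_mono hsplit
        _ ≤ μ (A k ∩ B) + μ (A k ∩ C k) := measure_union_le _ _
        _ = μ (A k ∩ B) + μ (A k) * μ (C k) := by rw [hmul]
        _ ≤ μ (A k ∩ B) + μ (A k) * 2⁻¹ := by gcongr; exact hCsmall k hk
    have h' : μ (A k) - μ (A k) / 2 ≤ μ (A k ∩ B) := by
      rw [tsub_le_iff_right]
      rw [div_eq_mul_inv]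
      exact hstep
    rw [ENNReal.sub_half (measure_ne_top μ _)] at h'
    calc μ (A k) = 2 * (μ (A k) / 2) := by
          rw [ENNReal.mul_div_cancel' (by norm_num) (by norm_num)]
      _ ≤ 2 * μ (A k ∩ B) := by gcongr
  have hdisjInter : (↑(Finset.range (N+1)) : Set ℕ).PairwiseDisjoint (fun k => A k ∩ B) := by
    intro k hk l hl hkl
    exact Disjoint.mono inter_subset_left inter_subset_left (hdisj' hk hl hkl)
  calc μ {ω | ∃ k ≤ N, 3*a ≤ |W (u k) ω|}
      ≤ μ (⋃ k ∈ Finset.range (N+1), A k) := measure_mono hcover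
    _ = ∑ k ∈ Finset.range (N+1), μ (A k) :=
        measure_biUnion_finset hdisj' (fun k _ => hAmeas k)
    _ ≤ ∑ k ∈ Finset.range (N+1), 2 * μ (A k ∩ B) := Finset.sum_le_sum key
    _ = 2 * ∑ k ∈ Finset.range (N+1), μ (A k ∩ B) := by rw [Finset.mul_sum]
    _ = 2 * μ (⋃ k ∈ Finset.range (N+1), (A k ∩ B)) := by
        rw [measure_biUnion_finset hdisjInter (fun k _ => (hAmeas k).inter hBmeas)]
    _ ≤ 2 * μ B := by
        gcongr
        exact iUnion₂_subset fun k _ => inter_subset_right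

lemma grid_bound (hW : IsBrownianMotion μ W) {a : ℝ} (ha : 1 ≤ a) (F : Finset ℝ)
    (hF : ∀ q ∈ F, q ∈ Icc (0:ℝ) 1) :
    μ {ω | ∃ q ∈ F, 3*a ≤ |W q ω|} ≤ 2 * μ {ω | a ≤ |W 1 ω|} := by
  classical
  set F' : Finset ℝ := insert 0 (insert 1 F) with hF'
  have hmem : ∀ x ∈ F', x ∈ Icc (0:ℝ) 1 := by
    intro x hx
    rw [hF', Finset.mem_insert, Finset.mem_insert] at hx
    rcases hx with rfl | rfl | hx
    · exact ⟨le_refl 0, zero_le_one⟩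
    · exact ⟨zero_le_one, le_refl 1⟩
    · exact hF x hx
  set M : ℕ := F'.card with hM
  have hMpos : 0 < M := Finset.card_pos.2 ⟨0, by simp [hF']⟩
  set iso := F'.orderIsoOfFin (rfl : F'.card = M) with hiso
  set u : ℕ → ℝ := fun i => if h : i < M then (iso ⟨i, h⟩ : ℝ) else 1 with hu'
  have humem : ∀ i (h : i < M), (u i) ∈ Icc (0:ℝ) 1 := by
    intro i h
    have : ((iso ⟨i, h⟩ : F') : ℝ) ∈ F' := (iso ⟨i, h⟩).2
    simp only [hu', dif_pos h]
    exact hmem _ this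
  have hu : Monotone u := by
    intro i j hij
    by_cases hi : i < M
    · by_cases hj : j < M
      · simp only [hu', dif_pos hi, dif_pos hj]
        exact Subtype.coe_le_coe.2 (iso.monotone (by exact hij))
      · simp only [hu', dif_pos hi, dif_neg hj]
        exact (hmem _ (iso ⟨i, hi⟩).2).2
    · have hj : ¬ j < M := fun hc => hi (lt_of_le_of_lt hij hc)
      simp only [hu', dif_neg hi, dif_neg hj, le_refl]
  have h0 : u 0 = 0 := by
    have h0m : (0:ℝ) ∈ F' := by simp [hF']
    simp only [hu', dif_pos hMpos]
    refine le_antisymm ?_ (hmem _ (iso ⟨0, hMpos⟩).2).1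
    have hle : (⟨0, hMpos⟩ : Fin M) ≤ iso.symm ⟨0, h0m⟩ := Fin.mk_le_mk.2 (Nat.zero_le _)
    have := iso.monotone hle
    rw [OrderIso.apply_symm_apply] at this
    exact_mod_cast this
  have h1 : u (M - 1) = 1 := by
    have h1m : (1:ℝ) ∈ F' := by simp [hF']
    have hlt : M - 1 < M := Nat.sub_lt hMpos one_pos
    simp only [hu', dif_pos hlt]
    refine le_antisymm (hmem _ (iso ⟨M-1, hlt⟩).2).2 ?_
    have hle : iso.symm ⟨1, h1m⟩ ≤ (⟨M-1, hlt⟩ : Fin M) := by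
      rw [Fin.le_def]
      have h2 := (iso.symm ⟨1, h1m⟩).isLt
      have h3 : (⟨M-1, hlt⟩ : Fin M).val = M - 1 := rfl
      rw [h3]
      omega
    have := iso.monotone hle
    rw [OrderIso.apply_symm_apply] at this
    exact_mod_cast this
  have hsub : {ω | ∃ q ∈ F, 3*a ≤ |W q ω|} ⊆ {ω | ∃ k ≤ M - 1, 3*a ≤ |W (u k) ω|} := by
    intro ω hω
    obtain ⟨q, hqF, hq⟩ := hω
    have hqF' : q ∈ F' := by simp [hF', hqF]
    set k : Fin M := iso.symm ⟨q, hqF'⟩ with hk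
    refine ⟨(k:ℕ), by omega, ?_⟩
    have hue : u (k:ℕ) = q := by
      simp only [hu', dif_pos k.isLt]
      have : iso ⟨(k:ℕ), k.isLt⟩ = iso k := by congr 1
      rw [this, hk, OrderIso.apply_symm_apply]
    rwa [hue]
  exact le_trans (measure_mono hsub) (etemadi hW hu h0 h1 ha)

lemma supAbsW_tail (hW : IsBrownianMotion μ W) {a : ℝ} (ha : 1 ≤ a) :
    μ {ω | 3*a < supAbsW W ω} ≤ ENNReal.ofReal (4 * rexp (-a^2/2)) := by
  set e := TopologicalSpace.denseSeq (Set.Icc (0:ℝ) 1) with he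
  set G : ℕ → Set Ω := fun N => {ω | ∃ n ≤ N, 3*a ≤ |W (e n) ω|} with hG
  have hGmono : Monotone G := by
    intro N N' hNN' ω hω
    obtain ⟨n, hn, h⟩ := hω
    exact ⟨n, le_trans hn hNN', h⟩
  have hsub : {ω | 3*a < supAbsW W ω} ⊆ ⋃ N, G N := by
    intro ω hω
    simp only [mem_setOf_eq] at hω
    rw [supAbsW_eq hW ω] at hω
    have hbdd2 : BddAbove (range fun n : ℕ => |W (e n) ω|) := by
      refine (bddAbove_absW hW ω).mono ?_
      rintro r ⟨n, rfl⟩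
      exact ⟨e n, rfl⟩
    obtain ⟨n, hn⟩ := (lt_ciSup_iff hbdd2).1 hω
    exact Set.mem_iUnion.2 ⟨n, n, le_refl n, le_of_lt hn⟩
  have hGbound : ∀ N, μ (G N) ≤ 2 * μ {ω | a ≤ |W 1 ω|} := by
    intro N
    classical
    set F : Finset ℝ := (Finset.range (N+1)).image (fun n => (e n : ℝ)) with hF
    have hFmem : ∀ q ∈ F, q ∈ Icc (0:ℝ) 1 := by
      intro q hq
      rw [hF, Finset.mem_image] at hq
      obtain ⟨n, _, rfl⟩ := hq
      exact (e n).2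
    refine le_trans (measure_mono ?_) (grid_bound hW ha F hFmem)
    intro ω hω
    obtain ⟨n, hn, h⟩ := hω
    exact ⟨(e n : ℝ), Finset.mem_image.2 ⟨n, Finset.mem_range.2 (Nat.lt_succ_of_le hn), rfl⟩, h⟩
  have hUnion : μ (⋃ N, G N) = ⨆ N, μ (G N) := by
    refine Directed.measure_iUnion ?_
    exact hGmono.directed_le
  have hGmeas : μ (⋃ N, G N) ≤ 2 * μ {ω | a ≤ |W 1 ω|} := by
    rw [hUnion]
    exact iSup_le hGbound
  refine le_trans (le_trans (measure_mono hsub) hGmeas) ?_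
  have htail : μ {ω | a ≤ |W 1 ω|} ≤ ENNReal.ofReal (2 * rexp (-a^2/2)) := by
    have hseteq : {ω | a ≤ |W 1 ω|} = {ω | a ≤ |W 1 ω - W 0 ω|} := by
      ext ω; rw [mem_setOf_eq, mem_setOf_eq, hW.init ω, sub_zero]
    rw [hseteq]
    exact tail_incr hW (le_refl 0) zero_le_one (by norm_num) ha
  calc 2 * μ {ω | a ≤ |W 1 ω|} ≤ 2 * ENNReal.ofReal (2 * rexp (-a^2/2)) := by gcongr
    _ = ENNReal.ofReal (4 * rexp (-a^2/2)) := by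
        rw [← ENNReal.ofReal_ofNat 2, ← ENNReal.ofReal_mul (by norm_num)]
        norm_num
        ring_nf

lemma integrable_exp_supAbsW (hW : IsBrownianMotion μ W) :
    Integrable (fun ω => rexp (supAbsW W ω)) μ := by
  haveI := hW.isProb
  have hmeas : Measurable fun ω => rexp (supAbsW W ω) :=
    Real.measurable_exp.comp (measurable_supAbsW hW)
  refine ⟨hmeas.aestronglyMeasurable, ?_⟩
  rw [hasFiniteIntegral_iff_ofReal (ae_of_all _ (fun ω => (Real.exp_pos _).le))]
  have hsetmeas : ∀ m : ℕ, MeasurableSet {ω | 3*(m:ℝ) ≤ supAbsW W ω} :=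
    fun m => measurableSet_le measurable_const (measurable_supAbsW hW)
  have hpt : ∀ ω, ENNReal.ofReal (rexp (supAbsW W ω))
      ≤ ∑' m : ℕ, ({ω | 3*(m:ℝ) ≤ supAbsW W ω}).indicator
          (fun _ => ENNReal.ofReal (rexp (3*(m:ℝ)+3))) ω := by
    intro ω
    set s := supAbsW W ω with hs
    have hs0 : 0 ≤ s := supAbsW_nonneg hW ω
    set m₀ : ℕ := ⌊s/3⌋₊ with hm₀
    have hle : 3*(m₀:ℝ) ≤ s := by
      have := Nat.floor_le (by positivity : (0:ℝ) ≤ s/3)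
      rw [← hm₀] at this
      linarith
    have hlt : s < 3*(m₀:ℝ)+3 := by
      have := Nat.lt_floor_add_one (s/3)
      rw [← hm₀] at this
      linarith
    refine le_trans ?_ (ENNReal.le_tsum m₀)
    rw [Set.indicator_of_mem (by exact hle : ω ∈ {ω | 3*(m₀:ℝ) ≤ supAbsW W ω})]
    exact ENNReal.ofReal_le_ofReal (Real.exp_le_exp.2 (le_of_lt hlt))
  have hterm : ∀ m : ℕ, ENNReal.ofReal (rexp (3*(m:ℝ)+3)) * μ {ω | 3*(m:ℝ) ≤ supAbsW W ω}
      ≤ ENNReal.ofReal (4 * rexp 21 * (rexp (-1))^m) := by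
    intro m
    have hexpm : (rexp (-1))^m = rexp (-(m:ℝ)) := by
      rw [← Real.exp_nat_mul]
      ring_nf
    rcases le_or_gt (m:ℝ) 1 with hm | hm
    · calc ENNReal.ofReal (rexp (3*(m:ℝ)+3)) * μ {ω | 3*(m:ℝ) ≤ supAbsW W ω}
          ≤ ENNReal.ofReal (rexp (3*(m:ℝ)+3)) * 1 := by gcongr; exact prob_le_one
        _ = ENNReal.ofReal (rexp (3*(m:ℝ)+3)) := mul_one _
        _ ≤ ENNReal.ofReal (4 * rexp 21 * (rexp (-1))^m) := by
            apply ENNReal.ofReal_le_ofReal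
            rw [hexpm, mul_assoc, ← Real.exp_add]
            have h4 : (1:ℝ) ≤ 4 := by norm_num
            calc rexp (3*(m:ℝ)+3) ≤ rexp (21 + -(m:ℝ)) := by
                  apply Real.exp_le_exp.2; linarith
              _ ≤ 4 * rexp (21 + -(m:ℝ)) := by nlinarith [Real.exp_pos (21 + -(m:ℝ))]
    · have hm2 : 2 ≤ m := by
        have := Nat.one_lt_cast.1 hm
        omega
      have hm1 : (1:ℝ) ≤ (m:ℝ) - 1 := by
        have h2 : (2:ℝ) ≤ (m:ℝ) := by exact_mod_cast hm2
        linarith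
      have hsubset : {ω | 3*(m:ℝ) ≤ supAbsW W ω} ⊆ {ω | 3*((m:ℝ)-1) < supAbsW W ω} := by
        intro ω hω
        simp only [mem_setOf_eq] at hω ⊢
        linarith
      have htail := le_trans (measure_mono hsubset) (supAbsW_tail hW hm1)
      calc ENNReal.ofReal (rexp (3*(m:ℝ)+3)) * μ {ω | 3*(m:ℝ) ≤ supAbsW W ω}
          ≤ ENNReal.ofReal (rexp (3*(m:ℝ)+3)) * ENNReal.ofReal (4 * rexp (-((m:ℝ)-1)^2/2)) := by
            gcongr
        _ = ENNReal.ofReal (rexp (3*(m:ℝ)+3) * (4 * rexp (-((m:ℝ)-1)^2/2))) := by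
            rw [← ENNReal.ofReal_mul (by positivity)]
        _ ≤ ENNReal.ofReal (4 * rexp 21 * (rexp (-1))^m) := by
            apply ENNReal.ofReal_le_ofReal
            rw [hexpm]
            have hexp : rexp (3*(m:ℝ)+3) * rexp (-((m:ℝ)-1)^2/2) ≤ rexp 21 * rexp (-(m:ℝ)) := by
              rw [← Real.exp_add, ← Real.exp_add]
              apply Real.exp_le_exp.2
              nlinarith [sq_nonneg ((m:ℝ) - 5)]
            nlinarith [hexp]
  have hsummable : Summable (fun m : ℕ => 4 * rexp 21 * (rexp (-1))^m) := by
    refine Summable.mul_left _ (summable_geometric_of_lt_one (Real.exp_pos _).le ?_)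
    rw [Real.exp_lt_one_iff]
    norm_num
  calc ∫⁻ ω, ENNReal.ofReal (rexp (supAbsW W ω)) ∂μ
      ≤ ∫⁻ ω, ∑' m : ℕ, ({ω | 3*(m:ℝ) ≤ supAbsW W ω}).indicator
          (fun _ => ENNReal.ofReal (rexp (3*(m:ℝ)+3))) ω ∂μ := lintegral_mono hpt
    _ = ∑' m : ℕ, ∫⁻ ω, ({ω | 3*(m:ℝ) ≤ supAbsW W ω}).indicator
          (fun _ => ENNReal.ofReal (rexp (3*(m:ℝ)+3))) ω ∂μ :=
        lintegral_tsum (fun m => (measurable_const.indicator (hsetmeas m)).aemeasurable)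
    _ = ∑' m : ℕ, ENNReal.ofReal (rexp (3*(m:ℝ)+3)) * μ {ω | 3*(m:ℝ) ≤ supAbsW W ω} :=
        tsum_congr (fun m => lintegral_indicator_const (hsetmeas m) _)
    _ ≤ ∑' m : ℕ, ENNReal.ofReal (4 * rexp 21 * (rexp (-1))^m) := ENNReal.tsum_le_tsum hterm
    _ = ENNReal.ofReal (∑' m : ℕ, 4 * rexp 21 * (rexp (-1))^m) :=
        (ENNReal.ofReal_tsum_of_nonneg (fun m => by positivity) hsummable).symm
    _ < ⊤ := ENNReal.ofReal_lt_top

lemma natSigma_le (hW : IsBrownianMotion μ W) (s : ℝ) :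
    natSigma W s ≤ (inferInstance : MeasurableSpace Ω) := by
  refine iSup₂_le fun u _ => ?_
  exact measurable_iff_comap_le.1 (hW.meas u)

lemma measurable_of_stopping (hW : IsBrownianMotion μ W) {σ : Ω → ℝ}
    (hσ : IsStoppingTimeFor W σ) : Measurable σ := by
  have h : ∀ s : ℝ, MeasurableSet (σ ⁻¹' Iic s) := by
    intro s
    exact natSigma_le hW s _ (hσ s)
  have hgen : @Measurable Ω ℝ _ (MeasurableSpace.generateFrom (range Iic)) σ := by
    refine measurable_generateFrom ?_
    rintro t ⟨s, rfl⟩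
    exact h s
  have heq : (inferInstance : MeasurableSpace ℝ)
      = MeasurableSpace.generateFrom (range Iic) := by
    rw [BorelSpace.measurable_eq (α := ℝ), borel_eq_generateFrom_Iic]
  exact hgen.mono le_rfl (le_of_eq heq)

lemma measurable_stopped (hW : IsBrownianMotion μ W) {σ : Ω → ℝ} (hσ : Measurable σ) :
    Measurable fun ω => W (σ ω) ω := by
  have hj : Measurable (Function.uncurry W) :=
    measurable_uncurry_of_continuous_of_measurable hW.cont hW.meas
  exact hj.comp (hσ.prodMk measurable_id)

lemma measurable_integrand (hW : IsBrownianMotion μ W) (t x : ℝ) {τ : Ω → ℝ}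
    (hτ : Measurable τ) :
    Measurable fun ω => rexp (Zproc W t x (t + τ ω) ω) := by
  apply Real.measurable_exp.comp
  unfold Zproc
  apply Measurable.add
  · exact ((measurable_const.sub (measurable_const.add hτ)).div_const _).mul_const x
  · apply Measurable.mul
    · exact Real.continuous_sqrt.measurable.comp
        ((measurable_const.sub (measurable_const.add hτ)).div_const _)
    · exact measurable_stopped hW ((measurable_const.add hτ).sub measurable_const)

lemma theta_mem {t r : ℝ} (ht : t ∈ Icc (0:ℝ) 1) (hr : r ∈ Icc 0 (1-t)) :
    (1-(t+r))/(1-t) ∈ Icc (0:ℝ) 1 := by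
  rcases eq_or_lt_of_le ht.2 with h1 | h1
  · have hr0 : r = 0 := le_antisymm (by simpa [← h1] using hr.2) hr.1
    subst hr0
    have hz : (1-(t+0))/(1-t) = 0 := by rw [← h1]; norm_num
    rw [hz]
    exact ⟨le_rfl, zero_le_one⟩
  · have hpos : 0 < 1 - t := by linarith
    constructor
    · apply div_nonneg _ (le_of_lt hpos)
      linarith [hr.2]
    · rw [div_le_one hpos]
      linarith [hr.1]

lemma Zproc_eq (W : ℝ → Ω → ℝ) (t x r : ℝ) (ω : Ω) :
    Zproc W t x (t + r) ω
      = (1-(t+r))/(1-t) * x + Real.sqrt ((1-(t+r))/(1-t)) * W r ω := by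
  unfold Zproc
  rw [add_sub_cancel_left]

lemma Zproc_abs_le (hW : IsBrownianMotion μ W) {t r : ℝ} (ht : t ∈ Icc (0:ℝ) 1)
    (hr : r ∈ Icc 0 (1-t)) (x : ℝ) (ω : Ω) :
    |Zproc W t x (t + r) ω| ≤ |x| + supAbsW W ω := by
  rw [Zproc_eq]
  set θ := (1-(t+r))/(1-t) with hθ
  have hθm : θ ∈ Icc (0:ℝ) 1 := theta_mem ht hr
  have hsq : Real.sqrt θ ≤ 1 := by
    rw [show (1:ℝ) = Real.sqrt 1 from (Real.sqrt_one).symm]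
    exact Real.sqrt_le_sqrt hθm.2
  have hsq0 : 0 ≤ Real.sqrt θ := Real.sqrt_nonneg _
  have hWr : |W r ω| ≤ supAbsW W ω :=
    abs_le_supAbsW hW ω ⟨hr.1, le_trans hr.2 (by linarith [ht.1])⟩
  calc |θ * x + Real.sqrt θ * W r ω| ≤ |θ * x| + |Real.sqrt θ * W r ω| := abs_add_le _ _
    _ = |θ| * |x| + |Real.sqrt θ| * |W r ω| := by rw [abs_mul, abs_mul]
    _ ≤ 1 * |x| + 1 * (supAbsW W ω) := by
        apply add_le_add
        · apply mul_le_mul (by rw [abs_of_nonneg hθm.1]; exact hθm.2) le_rfl (abs_nonneg _)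
            zero_le_one
        · apply mul_le_mul (by rwa [abs_of_nonneg hsq0]) hWr (abs_nonneg _) zero_le_one
    _ = |x| + supAbsW W ω := by ring

lemma Zproc_sub (W : ℝ → Ω → ℝ) (t x y r : ℝ) (ω : Ω) :
    Zproc W t y (t + r) ω - Zproc W t x (t + r) ω = (1-(t+r))/(1-t) * (y - x) := by
  rw [Zproc_eq, Zproc_eq]
  ring

lemma exp_sub_exp_le (a b : ℝ) : rexp b - rexp a ≤ rexp (max a b) * |b - a| := by
  rcases le_total a b with hab | hab
  · rw [max_eq_right hab, abs_of_nonneg (sub_nonneg.2 hab)]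
    have h1 := Real.add_one_le_exp (a - b)
    have h2 : rexp (a-b) * rexp b = rexp a := by rw [← Real.exp_add]; ring_nf
    nlinarith [Real.exp_pos b]
  · have h1 : rexp b ≤ rexp a := Real.exp_le_exp.2 hab
    have h2 : 0 ≤ rexp (max a b) * |b - a| :=
      mul_nonneg (Real.exp_pos _).le (abs_nonneg _)
    linarith

/-- `x ↦ v(t,x)` is Lipschitz on compacts, uniformly in `t ∈ [0,1]`,
with constant `L_K = c₁ · max_{x ∈ K} e^{|x|}`, where `c₁ = E[e^{S_1}]`. -/
theorem value_lipschitz_space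
    {Ω : Type*} [MeasurableSpace Ω] (μ : Measure Ω) (W : ℝ → Ω → ℝ)
    (hW : IsBrownianMotion μ W) (K : Set ℝ) (hK : IsCompact K) :
    (∃ L > 0, ∀ t ∈ Set.Icc (0:ℝ) 1, ∀ x ∈ K, ∀ y ∈ K,
        |value μ W t y - value μ W t x| ≤ L * |y - x|) ∧
    (∀ t ∈ Set.Icc (0:ℝ) 1, ∀ x ∈ K, ∀ y ∈ K,
        |value μ W t y - value μ W t x|
          ≤ (∫ ω, Real.exp (supAbsW W ω) ∂μ) * (⨆ z : K, Real.exp |(z : ℝ)|)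
              * |y - x|) := by
  classical
  haveI := hW.isProb
  have hint := integrable_exp_supAbsW hW
  set c1 : ℝ := ∫ ω, Real.exp (supAbsW W ω) ∂μ with hc1
  set M : ℝ := ⨆ z : K, Real.exp |(z : ℝ)| with hMdef
  have hc1_one : (1:ℝ) ≤ c1 := by
    rw [hc1]
    calc (1:ℝ) = ∫ _ω, (1:ℝ) ∂μ := by simp
      _ ≤ ∫ ω, Real.exp (supAbsW W ω) ∂μ := integral_mono (integrable_const 1) hint
            (fun ω => Real.one_le_exp (supAbsW_nonneg hW ω))
  have hc1_0 : (0:ℝ) ≤ c1 := by linarith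
  have hMbdd : BddAbove (range fun z : K => Real.exp |(z : ℝ)|) := by
    have h := (hK.image ((Real.continuous_exp).comp continuous_abs)).bddAbove
    have he : (range fun z : K => Real.exp |(z : ℝ)|) = (fun z : ℝ => Real.exp |z|) '' K := by
      ext r; simp [Set.mem_image, Subtype.exists]
    rwa [he]
  have hxM : ∀ x ∈ K, Real.exp |x| ≤ M := fun x hx => le_ciSup hMbdd ⟨x, hx⟩
  have hstop0 : ∀ t : ℝ, IsStoppingTimeFor W (fun _ : Ω => t + 0) := by
    intro t s
    by_cases h : t + 0 ≤ s
    · have he : {ω : Ω | t + 0 ≤ s} = univ := eq_univ_of_forall fun ω => h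
      rw [he]; exact @MeasurableSet.univ _ (natSigma W s)
    · have he : {ω : Ω | t + 0 ≤ s} = ∅ := eq_empty_iff_forall_notMem.2 fun ω => h
      rw [he]; exact @MeasurableSet.empty _ (natSigma W s)
  -- integrability and bound for each admissible stopping time
  have hIb : ∀ t ∈ Icc (0:ℝ) 1, ∀ (x : ℝ) (τ : Ω → ℝ),
      IsStoppingTimeFor W (fun ω => t + τ ω) → (∀ ω, τ ω ∈ Icc 0 (1-t)) →
      Integrable (fun ω => Real.exp (Zproc W t x (t + τ ω) ω)) μ ∧
      (∫ ω, Real.exp (Zproc W t x (t + τ ω) ω) ∂μ) ≤ Real.exp |x| * c1 := by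
    intro t ht x τ hst hrange
    have hτm : Measurable τ := by
      have h := measurable_of_stopping hW hst
      have he : τ = fun ω => (t + τ ω) - t := by funext ω; ring
      rw [he]
      exact h.sub measurable_const
    have hm := measurable_integrand hW t x hτm
    have hpt : ∀ ω, Real.exp (Zproc W t x (t + τ ω) ω)
        ≤ Real.exp |x| * Real.exp (supAbsW W ω) := by
      intro ω
      rw [← Real.exp_add]
      apply Real.exp_le_exp.2
      have h1 := Zproc_abs_le hW ht (hrange ω) x ω
      have h2 := le_abs_self (Zproc W t x (t + τ ω) ω)
      linarith
    have hi : Integrable (fun ω => Real.exp (Zproc W t x (t + τ ω) ω)) μ := by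
      refine Integrable.mono' (hint.const_mul (Real.exp |x|)) hm.aestronglyMeasurable ?_
      refine ae_of_all _ fun ω => ?_
      rw [Real.norm_eq_abs, abs_of_pos (Real.exp_pos _)]
      exact hpt ω
    refine ⟨hi, ?_⟩
    calc ∫ ω, Real.exp (Zproc W t x (t + τ ω) ω) ∂μ
        ≤ ∫ ω, Real.exp |x| * Real.exp (supAbsW W ω) ∂μ :=
          integral_mono hi (hint.const_mul _) hpt
      _ = Real.exp |x| * c1 := by rw [integral_const_mul]
  have hbdd : ∀ t ∈ Icc (0:ℝ) 1, ∀ x : ℝ,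
      BddAbove {r : ℝ | ∃ τ : Ω → ℝ, IsStoppingTimeFor W (fun ω => t + τ ω) ∧
        (∀ ω, τ ω ∈ Set.Icc 0 (1 - t)) ∧
        r = ∫ ω, Real.exp (Zproc W t x (t + τ ω) ω) ∂μ} := by
    intro t ht x
    refine ⟨Real.exp |x| * c1, ?_⟩
    rintro r ⟨τ, h1, h2, rfl⟩
    exact (hIb t ht x τ h1 h2).2
  have hv0 : ∀ t ∈ Icc (0:ℝ) 1, ∀ x : ℝ, 0 ≤ value μ W t x := by
    intro t ht x
    have hmem : (∫ ω, Real.exp (Zproc W t x (t + (fun _ : Ω => (0:ℝ)) ω) ω) ∂μ) ∈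
        {r : ℝ | ∃ τ : Ω → ℝ, IsStoppingTimeFor W (fun ω => t + τ ω) ∧
          (∀ ω, τ ω ∈ Set.Icc 0 (1 - t)) ∧
          r = ∫ ω, Real.exp (Zproc W t x (t + τ ω) ω) ∂μ} := by
      refine ⟨fun _ => 0, hstop0 t, fun ω => ⟨le_rfl, show (0:ℝ) ≤ 1 - t by linarith [ht.2]⟩, rfl⟩
    have h2 := le_csSup (hbdd t ht x) hmem
    have h3 : 0 ≤ ∫ ω, Real.exp (Zproc W t x (t + (fun _ : Ω => (0:ℝ)) ω) ω) ∂μ :=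
      integral_nonneg fun ω => (Real.exp_pos _).le
    exact le_trans h3 h2
  have hone : ∀ t ∈ Icc (0:ℝ) 1, ∀ x ∈ K, ∀ y ∈ K,
      value μ W t y ≤ value μ W t x + c1 * M * |y - x| := by
    intro t ht x hx y hy
    have hMx : Real.exp |x| ≤ M := hxM x hx
    have hMy : Real.exp |y| ≤ M := hxM y hy
    have hM0 : (0:ℝ) ≤ M := le_trans (Real.exp_pos _).le hMx
    apply Real.sSup_le
    · rintro r ⟨τ, hst, hrange, rfl⟩
      have hix := (hIb t ht x τ hst hrange).1
      have hiy := (hIb t ht y τ hst hrange).1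
      have hpt : ∀ ω, Real.exp (Zproc W t y (t + τ ω) ω)
          ≤ Real.exp (Zproc W t x (t + τ ω) ω)
            + (M * |y - x|) * Real.exp (supAbsW W ω) := by
        intro ω
        have h1 := exp_sub_exp_le (Zproc W t x (t + τ ω) ω) (Zproc W t y (t + τ ω) ω)
        have hax := Zproc_abs_le hW ht (hrange ω) x ω
        have hay := Zproc_abs_le hW ht (hrange ω) y ω
        have hmax : Real.exp (max (Zproc W t x (t + τ ω) ω) (Zproc W t y (t + τ ω) ω))
            ≤ M * Real.exp (supAbsW W ω) := by
          have hle : max (Zproc W t x (t + τ ω) ω) (Zproc W t y (t + τ ω) ω)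
              ≤ max |x| |y| + supAbsW W ω := by
            apply max_le
            · have h3 := le_abs_self (Zproc W t x (t + τ ω) ω)
              have h4 := le_max_left |x| |y|
              linarith
            · have h3 := le_abs_self (Zproc W t y (t + τ ω) ω)
              have h4 := le_max_right |x| |y|
              linarith
          calc Real.exp (max (Zproc W t x (t + τ ω) ω) (Zproc W t y (t + τ ω) ω))
              ≤ Real.exp (max |x| |y| + supAbsW W ω) := Real.exp_le_exp.2 hle
            _ = Real.exp (max |x| |y|) * Real.exp (supAbsW W ω) := Real.exp_add _ _
            _ ≤ M * Real.exp (supAbsW W ω) := by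
                apply mul_le_mul_of_nonneg_right _ (Real.exp_pos _).le
                rcases max_cases |x| |y| with ⟨h, _⟩ | ⟨h, _⟩ <;> rw [h]
                · exact hMx
                · exact hMy
        have hdiff : |Zproc W t y (t + τ ω) ω - Zproc W t x (t + τ ω) ω| ≤ |y - x| := by
          rw [Zproc_sub, abs_mul]
          have hθ := theta_mem ht (hrange ω)
          calc |(1-(t+τ ω))/(1-t)| * |y-x| ≤ 1 * |y - x| := by
                apply mul_le_mul_of_nonneg_right _ (abs_nonneg _)
                rw [abs_of_nonneg hθ.1]; exact hθ.2
            _ = |y - x| := one_mul _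
        have hcomb : Real.exp (max (Zproc W t x (t + τ ω) ω) (Zproc W t y (t + τ ω) ω))
              * |Zproc W t y (t + τ ω) ω - Zproc W t x (t + τ ω) ω|
            ≤ (M * Real.exp (supAbsW W ω)) * |y - x| :=
          mul_le_mul hmax hdiff (abs_nonneg _)
            (mul_nonneg hM0 (Real.exp_pos _).le)
        have hring : (M * Real.exp (supAbsW W ω)) * |y - x|
            = (M * |y - x|) * Real.exp (supAbsW W ω) := by ring
        linarith
      have hcalc : (∫ ω, Real.exp (Zproc W t y (t + τ ω) ω) ∂μ)
          ≤ (∫ ω, Real.exp (Zproc W t x (t + τ ω) ω) ∂μ) + (M * |y - x|) * c1 := by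
        calc (∫ ω, Real.exp (Zproc W t y (t + τ ω) ω) ∂μ)
            ≤ ∫ ω, (Real.exp (Zproc W t x (t + τ ω) ω)
                + (M * |y - x|) * Real.exp (supAbsW W ω)) ∂μ :=
              integral_mono hiy (hix.add (hint.const_mul _)) hpt
          _ = (∫ ω, Real.exp (Zproc W t x (t + τ ω) ω) ∂μ)
                + (M * |y - x|) * c1 := by
              rw [integral_add hix (hint.const_mul _), integral_const_mul]
      have hmem : (∫ ω, Real.exp (Zproc W t x (t + τ ω) ω) ∂μ) ∈
          {r : ℝ | ∃ τ : Ω → ℝ, IsStoppingTimeFor W (fun ω => t + τ ω) ∧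
            (∀ ω, τ ω ∈ Set.Icc 0 (1 - t)) ∧
            r = ∫ ω, Real.exp (Zproc W t x (t + τ ω) ω) ∂μ} := ⟨τ, hst, hrange, rfl⟩
      have hle : (∫ ω, Real.exp (Zproc W t x (t + τ ω) ω) ∂μ) ≤ value μ W t x :=
        le_csSup (hbdd t ht x) hmem
      have hring2 : (M * |y - x|) * c1 = c1 * M * |y - x| := by ring
      linarith
    · have h0 := hv0 t ht x
      have h1 : 0 ≤ c1 * M * |y - x| := by
        have hM0 : (0:ℝ) ≤ M := le_trans (Real.exp_pos _).le (hxM x hx)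
        exact mul_nonneg (mul_nonneg hc1_0 hM0) (abs_nonneg _)
      linarith
  have hpart2 : ∀ t ∈ Icc (0:ℝ) 1, ∀ x ∈ K, ∀ y ∈ K,
      |value μ W t y - value μ W t x| ≤ c1 * M * |y - x| := by
    intro t ht x hx y hy
    rw [abs_sub_le_iff]
    constructor
    · have := hone t ht x hx y hy; linarith
    · have h := hone t ht y hy x hx
      rw [abs_sub_comm] at h
      linarith
  refine ⟨?_, hpart2⟩
  rcases K.eq_empty_or_nonempty with rfl | ⟨z₀, hz₀⟩
  · exact ⟨1, one_pos, fun t ht x hx => absurd hx (notMem_empty x)⟩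
  · refine ⟨c1 * M, ?_, fun t ht x hx y hy => hpart2 t ht x hx y hy⟩
    have hMz : Real.exp |z₀| ≤ M := hxM z₀ hz₀
    have hMpos : 0 < M := lt_of_lt_of_le (Real.exp_pos _) hMz
    nlinarith


end
end

section
/- For $x \le x'$, the Brownian bridges satisfy the pathwise comparison $X^{t,x}_s \le X^{t,x'}_s$ for all $s \in [t,1]$, almost surely (using the same driving Brownian motion), and consequently the normalized value function $\tilde v(t,x) := e^{-x} v(t,x)$ is non-increasing in $x$. -/
open MeasureTheory ProbabilityTheory Real Set Filter

noncomputable section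

variable {Ω : Type*} [MeasurableSpace Ω]

/-- Core integral comparison: for `c` measurable with values in `[0,1]` and arbitrary `B`,
the integrals of `exp (c x + B)` are monotone in `x` and satisfy a reverse bound. -/
lemma core_integral_pair {Ω : Type*} [MeasurableSpace Ω] (μ : Measure Ω) (c B : Ω → ℝ)
    (hc : Measurable c) (hc0 : ∀ ω, 0 ≤ c ω) (hc1 : ∀ ω, c ω ≤ 1)
    {x x' : ℝ} (hxx : x ≤ x') :
    (∫ ω, Real.exp (c ω * x + B ω) ∂μ) ≤ (∫ ω, Real.exp (c ω * x' + B ω) ∂μ) ∧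
    (∫ ω, Real.exp (c ω * x' + B ω) ∂μ) ≤
      Real.exp (x' - x) * ∫ ω, Real.exp (c ω * x + B ω) ∂μ := by
  set f : Ω → ℝ := fun ω => Real.exp (c ω * x + B ω) with hf_def
  set g : Ω → ℝ := fun ω => Real.exp (c ω * x' + B ω) with hg_def
  have hfg : ∀ ω, f ω ≤ g ω := by
    intro ω
    exact Real.exp_le_exp.2 (by nlinarith [hc0 ω])
  have hkey : ∀ ω, g ω = Real.exp (c ω * (x' - x)) * f ω := by
    intro ω
    rw [hf_def, hg_def, ← Real.exp_add]
    ring_nf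
  have hkey' : ∀ ω, f ω = Real.exp (-(c ω * (x' - x))) * g ω := by
    intro ω
    rw [hkey ω, ← mul_assoc, ← Real.exp_add]
    simp
  have hgf : ∀ ω, g ω ≤ Real.exp (x' - x) * f ω := by
    intro ω
    rw [hkey ω]
    have : Real.exp (c ω * (x' - x)) ≤ Real.exp (x' - x) :=
      Real.exp_le_exp.2 (by nlinarith [hc0 ω, hc1 ω])
    exact mul_le_mul_of_nonneg_right this (Real.exp_pos _).le
  have hm : Measurable fun ω => Real.exp (c ω * (x' - x)) := (hc.mul_const _).exp
  have hm' : Measurable fun ω => Real.exp (-(c ω * (x' - x))) := ((hc.mul_const _).neg).exp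
  by_cases hfI : Integrable f μ
  · have hgm : AEStronglyMeasurable g μ := by
      have : AEStronglyMeasurable (fun ω => Real.exp (c ω * (x' - x)) * f ω) μ :=
        hm.aestronglyMeasurable.mul hfI.1
      exact this.congr (Filter.Eventually.of_forall fun ω => (hkey ω).symm)
    have hgI : Integrable g μ := by
      refine Integrable.mono' (hfI.const_mul (Real.exp (x' - x))) hgm
        (Filter.Eventually.of_forall fun ω => ?_)
      rw [Real.norm_eq_abs, abs_of_nonneg (Real.exp_pos _).le]
      exact hgf ω
    refine ⟨integral_mono hfI hgI hfg, ?_⟩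
    calc ∫ ω, g ω ∂μ ≤ ∫ ω, Real.exp (x' - x) * f ω ∂μ :=
          integral_mono hgI (hfI.const_mul _) hgf
      _ = Real.exp (x' - x) * ∫ ω, f ω ∂μ := integral_const_mul _ _
  · have hgI : ¬ Integrable g μ := by
      intro hgI
      apply hfI
      have hfm : AEStronglyMeasurable f μ := by
        have : AEStronglyMeasurable (fun ω => Real.exp (-(c ω * (x' - x))) * g ω) μ :=
          hm'.aestronglyMeasurable.mul hgI.1
        exact this.congr (Filter.Eventually.of_forall fun ω => (hkey' ω).symm)
      refine Integrable.mono' hgI hfm (Filter.Eventually.of_forall fun ω => ?_)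
      rw [Real.norm_eq_abs, abs_of_nonneg (Real.exp_pos _).le]
      exact hfg ω
    rw [integral_undef hfI, integral_undef hgI]
    exact ⟨le_refl _, by simp⟩

/-- A stopping time of the natural filtration of a process with measurable marginals is
measurable. -/
lemma measurable_of_stoppingTimeFor {Ω : Type*} [MeasurableSpace Ω] (W : ℝ → Ω → ℝ)
    (hWm : ∀ u, Measurable (W u)) (t : ℝ) (τ : Ω → ℝ)
    (hτ : IsStoppingTimeFor W (fun ω => t + τ ω)) : Measurable τ := by
  have hle : ∀ s : ℝ, natSigma W s ≤ ‹MeasurableSpace Ω› := by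
    intro s
    refine iSup_le fun u => iSup_le fun _ => ?_
    exact (hWm u).comap_le
  refine measurable_of_Iic fun a => ?_
  have : τ ⁻¹' Set.Iic a = {ω | t + τ ω ≤ t + a} := by
    ext ω; simp
  rw [this]
  exact hle (t + a) _ (hτ (t + a))

/-- Comparison of payoffs for a fixed stopping rule `τ`. -/
lemma value_pair {Ω : Type*} [MeasurableSpace Ω] (μ : Measure Ω) (W : ℝ → Ω → ℝ)
    (hWm : ∀ u, Measurable (W u)) (t : ℝ) (ht : t ∈ Set.Ico (0:ℝ) 1)
    {x x' : ℝ} (hxx : x ≤ x') (τ : Ω → ℝ)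
    (hst : IsStoppingTimeFor W (fun ω => t + τ ω)) (hIcc : ∀ ω, τ ω ∈ Set.Icc 0 (1 - t)) :
    (∫ ω, Real.exp (Zproc W t x (t + τ ω) ω) ∂μ) ≤
      (∫ ω, Real.exp (Zproc W t x' (t + τ ω) ω) ∂μ) ∧
    (∫ ω, Real.exp (Zproc W t x' (t + τ ω) ω) ∂μ) ≤
      Real.exp (x' - x) * ∫ ω, Real.exp (Zproc W t x (t + τ ω) ω) ∂μ := by
  have ht1 : (0:ℝ) < 1 - t := by linarith [ht.2]
  have hτm : Measurable τ := measurable_of_stoppingTimeFor W hWm t τ hst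
  set c : Ω → ℝ := fun ω => (1 - (t + τ ω)) / (1 - t) with hc_def
  set B : Ω → ℝ := fun ω => Real.sqrt (c ω) * W (τ ω) ω with hB_def
  have hc : Measurable c := (measurable_const.sub (measurable_const.add hτm)).div_const _
  have hc0 : ∀ ω, 0 ≤ c ω := fun ω =>
    div_nonneg (by linarith [(hIcc ω).2]) ht1.le
  have hc1 : ∀ ω, c ω ≤ 1 := fun ω => by
    rw [div_le_one ht1]
    linarith [(hIcc ω).1]
  have h1 : ∀ y : ℝ, ∀ ω, Zproc W t y (t + τ ω) ω = c ω * y + B ω := by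
    intro y ω
    simp only [Zproc, hc_def, hB_def, add_sub_cancel_left]
  simp_rw [h1 x, h1 x']
  exact core_integral_pair μ c B hc hc0 hc1 hxx

/-- pathwise comparison `X^{t,x}_s ≤ X^{t,x'}_s` for `x ≤ x'` (same driving
Brownian motion), and consequently `x ↦ e^{-x} v(t,x)` is non-increasing. -/
theorem bridge_comparison_and_tilde_antitone
    {Ω : Type*} [MeasurableSpace Ω] (μ : Measure Ω) (W : ℝ → Ω → ℝ)
    (hW : IsBrownianMotion μ W) (t : ℝ) (ht : t ∈ Set.Ico (0:ℝ) 1) :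
    (∀ x x' : ℝ, x ≤ x' →
      ∀ᵐ ω ∂μ, ∀ s ∈ Set.Icc t 1, bridge W t x s ω ≤ bridge W t x' s ω) ∧
    Antitone (fun x : ℝ => Real.exp (-x) * value μ W t x) := by
  have ht1 : (0:ℝ) < 1 - t := by linarith [ht.2]
  constructor
  · intro x x' hxx
    refine Filter.Eventually.of_forall fun ω s hs => ?_
    have hs1 : 0 ≤ 1 - s := by linarith [hs.2]
    have hdiv : x / (1 - t) ≤ x' / (1 - t) := by gcongr
    exact mul_le_mul_of_nonneg_left (by linarith) hs1
  · intro x x' hxx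
    simp only
    set S : ℝ → Set ℝ := fun y =>
      {r : ℝ | ∃ τ : Ω → ℝ, IsStoppingTimeFor W (fun ω => t + τ ω) ∧
        (∀ ω, τ ω ∈ Set.Icc 0 (1 - t)) ∧
        r = ∫ ω, Real.exp (Zproc W t y (t + τ ω) ω) ∂μ} with hS_def
    have hval : ∀ y, value μ W t y = sSup (S y) := fun y => rfl
    have hst0 : IsStoppingTimeFor W (fun ω => t + (fun _ : Ω => (0:ℝ)) ω) := by
      intro s
      by_cases h : t + 0 ≤ s
      · have : {ω : Ω | t + (0:ℝ) ≤ s} = Set.univ := by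
          ext ω; simpa using h
        rw [this]; exact @MeasurableSet.univ Ω (natSigma W s)
      · have : {ω : Ω | t + (0:ℝ) ≤ s} = ∅ := by
          ext ω; simpa using h
        rw [this]; exact @MeasurableSet.empty Ω (natSigma W s)
    have hIcc0 : ∀ ω : Ω, (fun _ : Ω => (0:ℝ)) ω ∈ Set.Icc 0 (1 - t) := fun ω =>
      ⟨le_refl _, ht1.le⟩
    have hne : ∀ y, (S y).Nonempty := fun y =>
      ⟨∫ ω, Real.exp (Zproc W t y (t + (0:ℝ)) ω) ∂μ, fun _ => 0, hst0, hIcc0, rfl⟩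
    have hA : ∀ r' ∈ S x', ∃ r ∈ S x, r' ≤ Real.exp (x' - x) * r := by
      rintro r' ⟨τ, hst, hIcc, rfl⟩
      exact ⟨∫ ω, Real.exp (Zproc W t x (t + τ ω) ω) ∂μ, ⟨τ, hst, hIcc, rfl⟩,
        (value_pair μ W hW.meas t ht hxx τ hst hIcc).2⟩
    have hB : ∀ r ∈ S x, ∃ r' ∈ S x', r ≤ r' := by
      rintro r ⟨τ, hst, hIcc, rfl⟩
      exact ⟨∫ ω, Real.exp (Zproc W t x' (t + τ ω) ω) ∂μ, ⟨τ, hst, hIcc, rfl⟩,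
        (value_pair μ W hW.meas t ht hxx τ hst hIcc).1⟩
    by_cases hb : BddAbove (S x)
    · have hmain : sSup (S x') ≤ Real.exp (x' - x) * sSup (S x) := by
        refine csSup_le (hne x') fun r' hr' => ?_
        obtain ⟨r, hr, hle⟩ := hA r' hr'
        exact hle.trans (mul_le_mul_of_nonneg_left (le_csSup hb hr) (Real.exp_pos _).le)
      rw [hval x, hval x']
      calc Real.exp (-x') * sSup (S x')
          ≤ Real.exp (-x') * (Real.exp (x' - x) * sSup (S x)) :=
            mul_le_mul_of_nonneg_left hmain (Real.exp_pos _).le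
        _ = Real.exp (-x) * sSup (S x) := by
            rw [← mul_assoc, ← Real.exp_add]; ring_nf
    · have hb' : ¬ BddAbove (S x') := by
        rintro ⟨M, hM⟩
        exact hb ⟨M, fun r hr => by
          obtain ⟨r', hr', h⟩ := hB r hr
          exact h.trans (hM hr')⟩
      rw [hval x, hval x', Real.sSup_of_not_bddAbove hb, Real.sSup_of_not_bddAbove hb']
      simp

end
end

section
/- Fix $x > 0$, $t \in (0,1)$ and $0 < \varepsilon \le t$. Let $X^{t,x}$ and $X^{t-\varepsilon,x}$ be Brownian bridges pinned at $0$ at time $1$, started at $x$ at times $t$ and $t-\varepsilon$ respectively, driven by the same Brownian increments (i.e., coupled via $dX^{t,x}_{t+u} = -\frac{X^{t,x}_{t+u}}{1-(t+u)}du + dB_u$ and $dX^{t-\varepsilon,x}_{t-\varepsilon+u} = -\frac{X^{t-\varepsilon,x}_{t-\varepsilon+u}}{1-(t-\varepsilon+u)}du + dB_u$ for the same Brownian motion $B$ with $B_0=0$). Let $\tau^0 := \inf\{u \in [0,1-t] : X^{t,x}_{t+u} \le 0\}$. Then almost surely $X^{t-\varepsilon,x}_{t-\varepsilon+s\wedge\tau^0}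 \ge X^{t,x}_{t+s\wedge\tau^0} \ge 0$ for all $s \in [0,1-t]$. -/
open MeasureTheory ProbabilityTheory Real Set Filter

noncomputable section

variable {Ω : Type*} [MeasurableSpace Ω]

/-- pathwise comparison of time-shifted Brownian bridges started from the same
point `x > 0` and driven by the same Brownian motion `B`. Here `Xt u` stands for
`X^{t,x}_{t+u}` and `Xe u` for `X^{t-ε,x}_{t-ε+u}`, both given in integral form, and
`τ⁰ = inf{u ∈ [0,1-t] : X^{t,x}_{t+u} ≤ 0}`. Then a.s.
`X^{t-ε,x}_{t-ε+s∧τ⁰} ≥ X^{t,x}_{t+s∧τ⁰} ≥ 0` for all `s ∈ [0,1-t]`. -/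
theorem shifted_bridge_comparison
    {Ω : Type*} [MeasurableSpace Ω] (μ : Measure Ω) (B : ℝ → Ω → ℝ)
    (hB : IsBrownianMotion μ B) (t ε x : ℝ) (hx : 0 < x)
    (ht : t ∈ Set.Ioo (0:ℝ) 1) (hε : 0 < ε) (hεt : ε ≤ t)
    (Xt Xe : ℝ → Ω → ℝ)
    (hXt : ∀ᵐ ω ∂μ, ContinuousOn (fun u => Xt u ω) (Set.Icc 0 (1 - t)) ∧
      ∀ u ∈ Set.Icc (0:ℝ) (1 - t),
        Xt u ω = x - (∫ r in (0:ℝ)..u, Xt r ω / (1 - (t + r))) + B u ω)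
    (hXe : ∀ᵐ ω ∂μ, ContinuousOn (fun u => Xe u ω) (Set.Icc 0 (1 - t)) ∧
      ∀ u ∈ Set.Icc (0:ℝ) (1 - t),
        Xe u ω = x - (∫ r in (0:ℝ)..u, Xe r ω / (1 - (t - ε + r))) + B u ω)
    (hhit : ∀ᵐ ω ∂μ, ∃ u ∈ Set.Icc (0:ℝ) (1 - t), Xt u ω ≤ 0) :
    ∀ᵐ ω ∂μ, ∀ s ∈ Set.Icc (0:ℝ) (1 - t),
      0 ≤ Xt (min s (sInf {u | u ∈ Set.Icc (0:ℝ) (1 - t) ∧ Xt u ω ≤ 0})) ω ∧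
      Xt (min s (sInf {u | u ∈ Set.Icc (0:ℝ) (1 - t) ∧ Xt u ω ≤ 0})) ω
        ≤ Xe (min s (sInf {u | u ∈ Set.Icc (0:ℝ) (1 - t) ∧ Xt u ω ≤ 0})) ω := by
  have hT0 : (0:ℝ) < 1 - t := by linarith [ht.2]
  filter_upwards [hXt, hXe, hhit] with ω hXtω hXeω hhitω
  obtain ⟨hXtc, hXteq⟩ := hXtω
  obtain ⟨hXec, hXeeq⟩ := hXeω
  set T := 1 - t with hT
  set S := {u | u ∈ Set.Icc (0:ℝ) T ∧ Xt u ω ≤ 0} with hSdef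
  have hSne : S.Nonempty := by
    obtain ⟨u0, hu0m, hu0⟩ := hhitω
    exact ⟨u0, hu0m, hu0⟩
  have hSbdd : BddBelow S := ⟨0, fun u hu => hu.1.1⟩
  have hSclosed : IsClosed S := by
    have : S = Set.Icc (0:ℝ) T ∩ (fun u => Xt u ω) ⁻¹' Set.Iic 0 := by
      ext u; simp [hSdef, Set.mem_Icc, and_assoc]
    rw [this]
    exact hXtc.preimage_isClosed_of_isClosed isClosed_Icc isClosed_Iic
  set τ := sInf S with hτdef
  have hτS : τ ∈ S := IsClosed.csInf_mem hSclosed hSne hSbdd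
  have hτ0 : 0 ≤ τ := hτS.1.1
  have hτT : τ ≤ T := hτS.1.2
  -- value at 0
  have hB0 : B 0 ω = 0 := hB.init ω
  have hXt0 : Xt 0 ω = x := by
    have := hXteq 0 ⟨le_refl 0, hT0.le⟩
    simpa [hB0] using this
  have hXe0 : Xe 0 ω = x := by
    have := hXeeq 0 ⟨le_refl 0, hT0.le⟩
    simpa [hB0] using this
  have hτpos : 0 < τ := by
    rcases lt_or_eq_of_le hτ0 with h | h
    · exact h
    · exfalso
      have := hτS.2
      rw [← h, hXt0] at this
      linarith
  -- positivity before τ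
  have hpos : ∀ u, 0 ≤ u → u < τ → 0 < Xt u ω := by
    intro u hu0 huτ
    by_contra h
    push_neg at h
    have : u ∈ S := ⟨⟨hu0, le_trans (le_of_lt huτ) hτT⟩, h⟩
    exact absurd (csInf_le hSbdd this) (not_le.mpr huτ)
  -- Xt τ = 0 via IVT
  have hXtτ : Xt τ ω = 0 := by
    have hIcc : Set.Icc (0:ℝ) τ ⊆ Set.Icc 0 T := Set.Icc_subset_Icc le_rfl hτT
    have hc : ContinuousOn (fun u => Xt u ω) (Set.Icc 0 τ) := hXtc.mono hIcc
    have h0mem : (0:ℝ) ∈ Set.Icc (Xt τ ω) (Xt 0 ω) := ⟨hτS.2, by rw [hXt0]; exact hx.le⟩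
    obtain ⟨c, hcmem, hc0⟩ := intermediate_value_Icc' hτ0 hc h0mem
    have hcS : c ∈ S := ⟨⟨hcmem.1, le_trans hcmem.2 hτT⟩, le_of_eq hc0⟩
    have : τ ≤ c := csInf_le hSbdd hcS
    have : c = τ := le_antisymm hcmem.2 this
    rw [← this]; exact hc0
  -- the integrand of the difference
  set F : ℝ → ℝ := fun r => Xe r ω / (1 - (t - ε + r)) - Xt r ω / (1 - (t + r)) with hFdef
  have hden_e : ∀ r ∈ Set.Icc (0:ℝ) T, (0:ℝ) < 1 - (t - ε + r) := by
    intro r hr; simp only [hT] at hr ⊢; linarith [hr.2]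
  have hint_t : ∀ v ∈ Set.Ico (0:ℝ) T,
      IntervalIntegrable (fun r => Xt r ω / (1 - (t + r))) MeasureTheory.volume 0 v := by
    intro v hv
    apply ContinuousOn.intervalIntegrable
    rw [Set.uIcc_of_le hv.1]
    apply ContinuousOn.div
    · exact hXtc.mono (Set.Icc_subset_Icc le_rfl hv.2.le)
    · fun_prop
    · intro r hr; simp only [hT] at hv; nlinarith [hr.2, hv.2]
  have hint_e : ∀ v ∈ Set.Ico (0:ℝ) T,
      IntervalIntegrable (fun r => Xe r ω / (1 - (t - ε + r))) MeasureTheory.volume 0 v := by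
    intro v hv
    apply ContinuousOn.intervalIntegrable
    rw [Set.uIcc_of_le hv.1]
    apply ContinuousOn.div
    · exact hXec.mono (Set.Icc_subset_Icc le_rfl hv.2.le)
    · fun_prop
    · intro r hr
      have := hden_e r ⟨hr.1, le_trans hr.2 hv.2.le⟩
      linarith
  -- difference equals primitive of F on [0, T)
  have hYeq : ∀ v ∈ Set.Ico (0:ℝ) T, Xt v ω - Xe v ω = ∫ r in (0:ℝ)..v, F r := by
    intro v hv
    have h1 := hXteq v ⟨hv.1, hv.2.le⟩
    have h2 := hXeeq v ⟨hv.1, hv.2.le⟩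
    rw [intervalIntegral.integral_sub (hint_e v hv) (hint_t v hv)]
    rw [h1, h2]; ring
  -- continuity of F on Ioo 0 T
  have hFcont : ContinuousOn F (Set.Ioo 0 T) := by
    have hsub : Set.Ioo (0:ℝ) T ⊆ Set.Icc 0 T := Set.Ioo_subset_Icc_self
    apply ContinuousOn.sub
    · apply ContinuousOn.div
      · exact hXec.mono hsub
      · fun_prop
      · intro r hr; have := hden_e r (hsub hr); linarith
    · apply ContinuousOn.div
      · exact hXtc.mono hsub
      · fun_prop
      · intro r hr; simp only [hT] at hr; nlinarith [hr.2]
  -- derivative of the difference on Ioo 0 τ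
  have hderivY : ∀ u ∈ Set.Ioo (0:ℝ) τ, HasDerivAt (fun v => Xt v ω - Xe v ω) (F u) u := by
    intro u hu
    have huT : u ∈ Set.Ioo (0:ℝ) T := ⟨hu.1, lt_of_lt_of_le hu.2 hτT⟩
    have hG : HasDerivAt (fun v => ∫ r in (0:ℝ)..v, F r) (F u) u := by
      apply intervalIntegral.integral_hasDerivAt_right
      · exact (hint_e u ⟨huT.1.le, huT.2⟩).sub (hint_t u ⟨huT.1.le, huT.2⟩)
      · exact ContinuousOn.stronglyMeasurableAtFilter isOpen_Ioo hFcont u huT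
      · exact hFcont.continuousAt (Ioo_mem_nhds huT.1 huT.2)
    apply hG.congr_of_eventuallyEq
    filter_upwards [Ioo_mem_nhds huT.1 huT.2] with v hv
    exact hYeq v ⟨hv.1.le, hv.2⟩
  -- the function h
  set h : ℝ → ℝ := fun v => (Xt v ω - Xe v ω) / (1 - t + ε - v) with hhdef
  have hden : ∀ v ∈ Set.Icc (0:ℝ) T, (0:ℝ) < 1 - t + ε - v := by
    intro v hv; simp only [hT] at hv; linarith [hv.2]
  have hhcont : ContinuousOn h (Set.Icc 0 τ) := by
    apply ContinuousOn.div
    · exact (hXtc.sub hXec).mono (Set.Icc_subset_Icc le_rfl hτT)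
    · fun_prop
    · intro v hv
      have := hden v ⟨hv.1, le_trans hv.2 hτT⟩
      linarith
  have hhderiv : ∀ u ∈ Set.Ioo (0:ℝ) τ, HasDerivAt h
      ((F u * (1 - t + ε - u) - (Xt u ω - Xe u ω) * (-1)) / (1 - t + ε - u) ^ 2) u := by
    intro u hu
    have hd : HasDerivAt (fun v : ℝ => 1 - t + ε - v) (-1) u := by
      simpa using ((hasDerivAt_id u).const_sub (1 - t + ε))
    exact (hderivY u hu).div hd (by
      have := hden u ⟨hu.1.le, le_trans hu.2.le hτT⟩; linarith)
  have hhderiv_nonpos : ∀ u ∈ Set.Ioo (0:ℝ) τ,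
      (F u * (1 - t + ε - u) - (Xt u ω - Xe u ω) * (-1)) / (1 - t + ε - u) ^ 2 ≤ 0 := by
    intro u hu
    have hXtu : 0 < Xt u ω := hpos u hu.1.le hu.2
    have ha : 0 < 1 - (t + u) := by
      have : u < T := lt_of_lt_of_le hu.2 hτT
      simp only [hT] at this; linarith
    have hde : 0 < 1 - (t - ε + u) := by linarith
    have hd2 : 0 < 1 - t + ε - u := by linarith
    apply div_nonpos_of_nonpos_of_nonneg _ (sq_nonneg _)
    have hkey : F u * (1 - t + ε - u) - (Xt u ω - Xe u ω) * (-1)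
        = Xt u ω * (-ε) / (1 - (t + u)) := by
      simp only [hFdef]
      field_simp
      ring
    rw [hkey]
    apply div_nonpos_of_nonpos_of_nonneg _ ha.le
    nlinarith
  have hanti : AntitoneOn h (Set.Icc 0 τ) := by
    apply antitoneOn_of_deriv_nonpos (convex_Icc 0 τ) hhcont
    · intro u hu
      rw [interior_Icc] at hu
      exact ((hhderiv u hu).differentiableAt).differentiableWithinAt
    · intro u hu
      rw [interior_Icc] at hu
      rw [(hhderiv u hu).deriv]
      exact hhderiv_nonpos u hu
  have hh0 : h 0 = 0 := by simp [hhdef, hXt0, hXe0]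
  have hYnonpos : ∀ u ∈ Set.Icc (0:ℝ) τ, Xt u ω - Xe u ω ≤ 0 := by
    intro u hu
    have hle : h u ≤ 0 := by
      rw [← hh0]
      exact hanti (Set.left_mem_Icc.mpr hτ0) hu hu.1
    have hd2 : 0 < 1 - t + ε - u := hden u ⟨hu.1, le_trans hu.2 hτT⟩
    by_contra hcon
    push_neg at hcon
    have : 0 < h u := div_pos hcon hd2
    linarith
  -- conclusion
  intro s hs
  set m := min s τ with hmdef
  have hm : m ∈ Set.Icc (0:ℝ) τ := ⟨le_min hs.1 hτ0, min_le_right s τ⟩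
  constructor
  · rcases lt_or_eq_of_le hm.2 with hlt | heq
    · exact (hpos m hm.1 hlt).le
    · rw [heq, hXtτ]
  · have := hYnonpos m hm
    linarith


end
end

section
/- Suppose the optimal boundary satisfies $b(t_0-) > b(t_0)$ at some $t_0 \in (0,1)$ where $b$ is non-increasing, $b \ge \tfrac12(1-\cdot)$, and $v$ solves $\partial_t v + \tfrac12\partial_{xx}v - \tfrac{x}{1-t}\partial_x v = 0$ on $\mathcal{C}$ with $\partial_t v \le 0$ and $v(t_0, y) = e^y$ for $y \in (b(t_0), b(t_0-))$. Then for every non-negative $\varphi \in C_c^\infty((x_1, x_2))$ with $[x_1,x_2] \subset (b(t_0), b(t_0-))$, one has $0 \le \int_{x_1}^{x_2} e^y\left(\tfrac12 - \tfrac{y}{1-t_0}\right)\varphi(y)\,dy$, which is a contradiction since $y \ge x_1 > \tfrac{1-t_0}{2}$ on the support. Hence $b$ is left-continuous on $(0,1)$. -/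
open MeasureTheory Real Set Filter Topology

noncomputable section

namespace BoundaryLC

/-- test function `((y-a)(c-y))^2` -/
def Phi (a c y : ℝ) : ℝ := ((y - a) * (c - y))^2

/-- first derivative of `Phi` -/
def Phi' (a c y : ℝ) : ℝ := 2*((y - a)*(c - y))*(a + c - 2*y)

/-- second derivative of `Phi` -/
def Phi'' (a c y : ℝ) : ℝ := 2*(a + c - 2*y)^2 - 4*((y - a)*(c - y))

/-- the adjoint operator applied to `Phi`, with `r = 1/(1-t)` -/
def Psi (a c r y : ℝ) : ℝ := Phi'' a c y / 2 + (Phi a c y + y * Phi' a c y) * r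

lemma hasDerivAt_g (a c y : ℝ) :
    HasDerivAt (fun y => (y - a) * (c - y)) (a + c - 2*y) y := by
  have h1 : HasDerivAt (fun y : ℝ => y - a) 1 y := (hasDerivAt_id y).sub_const a
  have h2 : HasDerivAt (fun y : ℝ => c - y) (0 - 1) y :=
    (hasDerivAt_const y c).sub (hasDerivAt_id y)
  have h := h1.mul h2
  rw [show a + c - 2*y = 1 * (c - y) + (y - a) * (0 - 1) by ring]
  exact h

lemma hasDerivAt_lin (a c y : ℝ) :
    HasDerivAt (fun y : ℝ => a + c - 2*y) (0 - 2*1) y :=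
  (hasDerivAt_const y (a + c)).sub ((hasDerivAt_id y).const_mul 2)

lemma hasDerivAt_Phi (a c y : ℝ) : HasDerivAt (fun y => Phi a c y) (Phi' a c y) y := by
  have h := (hasDerivAt_g a c y).pow 2
  rw [show Phi' a c y = ↑2 * ((y - a) * (c - y)) ^ (2-1) * (a + c - 2*y) by
    unfold Phi'; push_cast; ring]
  exact h

lemma hasDerivAt_Phi' (a c y : ℝ) : HasDerivAt (fun y => Phi' a c y) (Phi'' a c y) y := by
  have h := ((hasDerivAt_g a c y).const_mul 2).mul (hasDerivAt_lin a c y)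
  rw [show Phi'' a c y
      = 2 * (a + c - 2*y) * (a + c - 2*y) + 2 * ((y - a) * (c - y)) * (0 - 2*1) by
    unfold Phi''; ring]
  exact h

lemma continuous_Phi (a c : ℝ) : Continuous (fun y => Phi a c y) := by
  unfold Phi; fun_prop

lemma continuous_Phi' (a c : ℝ) : Continuous (fun y => Phi' a c y) := by
  unfold Phi'; fun_prop

lemma continuous_Phi'' (a c : ℝ) : Continuous (fun y => Phi'' a c y) := by
  unfold Phi''; fun_prop

lemma continuous_Psi (a c r : ℝ) : Continuous (fun y => Psi a c r y) := by
  unfold Psi Phi Phi' Phi''; fun_prop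

@[simp] lemma Phi_left (a c : ℝ) : Phi a c a = 0 := by simp [Phi]

@[simp] lemma Phi_right (a c : ℝ) : Phi a c c = 0 := by simp [Phi]

@[simp] lemma Phi'_left (a c : ℝ) : Phi' a c a = 0 := by simp [Phi']

@[simp] lemma Phi'_right (a c : ℝ) : Phi' a c c = 0 := by simp [Phi']

lemma Phi_nonneg (a c y : ℝ) : 0 ≤ Phi a c y := sq_nonneg _

lemma Phi_pos {a c y : ℝ} (h1 : a < y) (h2 : y < c) : 0 < Phi a c y := by
  have : 0 < (y - a) * (c - y) := mul_pos (by linarith) (by linarith)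
  exact pow_pos this 2

end BoundaryLC

open BoundaryLC

/-- left-continuity of the optimal boundary on `(0,1)`. Given a non-increasing
boundary `b` with `b(t) ≥ (1-t)/2`, a value function `v` continuous on `[0,1) × ℝ` solving
`∂_t v + ½ ∂_{xx} v - (x/(1-t)) ∂_x v = 0` with `∂_t v ≤ 0` in the continuation region
`C = {(t,x) : t ∈ [0,1), x < b(t)}`, and `v(t,x) = e^x` in the stopping region, a jump
`b(t₀-) > b(t₀)` would yield, for every non-negative test function `φ` supported in the gap,
the contradictory inequality `0 ≤ ∫ e^y (1/2 - y/(1-t₀)) φ(y) dy`; hence `b` is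
left-continuous at every `t₀ ∈ (0,1)`. -/
theorem boundary_left_continuous
    (v vt vx vxx : ℝ → ℝ → ℝ) (b : ℝ → ℝ)
    (hv_cont : ContinuousOn (fun p : ℝ × ℝ => v p.1 p.2) (Set.Ico 0 1 ×ˢ Set.univ))
    (hb_mono : AntitoneOn b (Set.Icc 0 1))
    (hb_low : ∀ t ∈ Set.Ico (0:ℝ) 1, (1 - t) / 2 ≤ b t)
    (hvt : ∀ t x : ℝ, t ∈ Set.Ico (0:ℝ) 1 → x < b t →
      HasDerivAt (fun s => v s x) (vt t x) t)
    (hvx : ∀ t x : ℝ, t ∈ Set.Ico (0:ℝ) 1 → x < b t →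
      HasDerivAt (fun y => v t y) (vx t x) x)
    (hvxx : ∀ t x : ℝ, t ∈ Set.Ico (0:ℝ) 1 → x < b t →
      HasDerivAt (fun y => vx t y) (vxx t x) x)
    (hPDE : ∀ t x : ℝ, t ∈ Set.Ico (0:ℝ) 1 → x < b t →
      vt t x + vxx t x / 2 - x / (1 - t) * vx t x = 0)
    (hvt_le : ∀ t x : ℝ, t ∈ Set.Ico (0:ℝ) 1 → x < b t → vt t x ≤ 0)
    (hstop : ∀ t x : ℝ, t ∈ Set.Ico (0:ℝ) 1 → b t ≤ x → v t x = Real.exp x) :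
    ∀ t₀ ∈ Set.Ioo (0:ℝ) 1, ContinuousWithinAt b (Set.Iio t₀) t₀ := by
  intro t₀ ht₀
  obtain ⟨ht0, ht1⟩ := ht₀
  by_contra hcont
  -- Step 0: extract a jump of size `ε`
  have hjump : ∃ ε > 0, ∀ t ∈ Ioo (0:ℝ) t₀, b t₀ + ε ≤ b t := by
    by_contra h
    push_neg at h
    apply hcont
    rw [Metric.continuousWithinAt_iff]
    intro ε hε
    obtain ⟨t, ht, hbt⟩ := h ε hε
    refine ⟨t₀ - t, by linarith [ht.2], ?_⟩
    intro s hs hdist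
    have hs' : s < t₀ := hs
    rw [Real.dist_eq] at hdist ⊢
    have hst : t ≤ s := by
      rcases abs_lt.1 hdist with ⟨h1, h2⟩; linarith
    have htm : t ∈ Icc (0:ℝ) 1 := ⟨ht.1.le, by linarith⟩
    have hsm : s ∈ Icc (0:ℝ) 1 := ⟨by linarith [ht.1], by linarith⟩
    have ht₀m : t₀ ∈ Icc (0:ℝ) 1 := ⟨ht0.le, ht1.le⟩
    have h1 : b s ≤ b t := hb_mono htm hsm hst
    have h2 : b t₀ ≤ b s := hb_mono hsm ht₀m hs'.le
    rw [abs_of_nonneg (by linarith)]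
    linarith
  obtain ⟨ε, hε, hgap⟩ := hjump
  set x₁ : ℝ := b t₀ + ε/3 with hx₁def
  set x₂ : ℝ := b t₀ + 2*ε/3 with hx₂def
  have hx₁₂ : x₁ < x₂ := by rw [hx₁def, hx₂def]; linarith
  have hbx₁ : b t₀ < x₁ := by rw [hx₁def]; linarith
  have hx₂b : ∀ t ∈ Ioo (0:ℝ) t₀, x₂ < b t := by
    intro t ht
    have := hgap t ht
    rw [hx₂def]; linarith
  have ht₀m : t₀ ∈ Ico (0:ℝ) 1 := ⟨ht0.le, ht1⟩
  have hlow : (1 - t₀)/2 < x₁ := lt_of_le_of_lt (hb_low t₀ ht₀m) hbx₁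
  have h1t₀ : (0:ℝ) < 1 - t₀ := by linarith
  set c₀ : ℝ := (1 - t₀)⁻¹ with hc₀def
  have hc₀pos : 0 < c₀ := by rw [hc₀def]; positivity
  -- Step A: for each `t ∈ (0, t₀)` the integral `∫ v ψ` is nonnegative
  have stepA : ∀ t ∈ Ioo (0:ℝ) t₀,
      0 ≤ ∫ y in x₁..x₂, v t y * Psi x₁ x₂ ((1-t)⁻¹) y := by
    intro t ht
    have htm : t ∈ Ico (0:ℝ) 1 := ⟨ht.1.le, lt_trans ht.2 ht1⟩
    have hyb : ∀ y ∈ Icc x₁ x₂, y < b t := fun y hy =>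
      lt_of_le_of_lt hy.2 (hx₂b t ht)
    have h1t : (0:ℝ) < 1 - t := by have := ht.2; linarith
    have h1tne : (1:ℝ) - t ≠ 0 := ne_of_gt h1t
    set H : ℝ → ℝ := fun y =>
      -(vx t y) * Phi x₁ x₂ y / 2 + v t y * Phi' x₁ x₂ y / 2
        + y * (v t y * Phi x₁ x₂ y) * (1-t)⁻¹ with hHdef
    have hderiv : ∀ y ∈ Icc x₁ x₂,
        HasDerivAt H (vt t y * Phi x₁ x₂ y + v t y * Psi x₁ x₂ ((1-t)⁻¹) y) y := by
      intro y hy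
      have hyb' := hyb y hy
      have h1 := hvx t y htm hyb'
      have h2 := hvxx t y htm hyb'
      have hphi := hasDerivAt_Phi x₁ x₂ y
      have hphi' := hasDerivAt_Phi' x₁ x₂ y
      have hvt_eq : vt t y = y * (1-t)⁻¹ * vx t y - vxx t y / 2 := by
        have h := hPDE t y htm hyb'
        rw [show y * (1-t)⁻¹ * vx t y = y / (1-t) * vx t y by rw [div_eq_mul_inv]]
        linarith
      rw [show vt t y * Phi x₁ x₂ y + v t y * Psi x₁ x₂ ((1-t)⁻¹) y
          = ((-(vxx t y)) * Phi x₁ x₂ y + (-(vx t y)) * Phi' x₁ x₂ y) / 2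
            + (vx t y * Phi' x₁ x₂ y + v t y * Phi'' x₁ x₂ y) / 2
            + (1 * (v t y * Phi x₁ x₂ y)
               + y * (vx t y * Phi x₁ x₂ y + v t y * Phi' x₁ x₂ y)) * (1-t)⁻¹ by
        rw [hvt_eq]; unfold Psi; ring]
      exact ((h2.neg.mul hphi).div_const 2).add ((h1.mul hphi').div_const 2)
        |>.add (((hasDerivAt_id y).mul (h1.mul hphi)).mul_const ((1-t)⁻¹))
    have hHcont : ContinuousOn H (Icc x₁ x₂) := fun y hy =>
      ((hderiv y hy).continuousAt).continuousWithinAt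
    have hvcont : ContinuousOn (fun y => v t y) (Icc x₁ x₂) := fun y hy =>
      ((hvx t y htm (hyb y hy)).continuousAt).continuousWithinAt
    have hgcont : ContinuousOn (fun y => v t y * Psi x₁ x₂ ((1-t)⁻¹) y) (Icc x₁ x₂) :=
      hvcont.mul ((continuous_Psi x₁ x₂ ((1-t)⁻¹)).continuousOn)
    have hgint : IntegrableOn (fun y => v t y * Psi x₁ x₂ ((1-t)⁻¹) y) (Icc x₁ x₂) :=
      hgcont.integrableOn_Icc
    have hbnd : ∀ y ∈ Ioo x₁ x₂, vt t y * Phi x₁ x₂ y + v t y * Psi x₁ x₂ ((1-t)⁻¹) y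
        ≤ v t y * Psi x₁ x₂ ((1-t)⁻¹) y := by
      intro y hy
      have hyI : y ∈ Icc x₁ x₂ := Ioo_subset_Icc_self hy
      have hvtle := hvt_le t y htm (hyb y hyI)
      have hphinn := Phi_nonneg x₁ x₂ y
      nlinarith
    have hkey := intervalIntegral.sub_le_integral_of_hasDeriv_right_of_le hx₁₂.le hHcont
      (fun y hy => ((hderiv y (Ioo_subset_Icc_self hy)).hasDerivWithinAt))
      hgint hbnd
    have hends : H x₂ - H x₁ = 0 := by
      rw [hHdef]; simp
    rw [← hends]
    exact hkey
  -- Step B: pass to the limit `t ↑ t₀`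
  have hmem : Ioo (t₀/2) t₀ ∈ 𝓝[<] t₀ := Ioo_mem_nhdsLT_of_mem ⟨by linarith, le_rfl⟩
  obtain ⟨M, hM⟩ := (isCompact_Icc.prod isCompact_Icc).exists_bound_of_continuousOn
    (hv_cont.mono (fun p hp => ⟨⟨(hp.1 : p.1 ∈ Icc 0 t₀).1, lt_of_le_of_lt hp.1.2 ht1⟩,
      mem_univ _⟩) : ContinuousOn (fun p : ℝ × ℝ => v p.1 p.2) (Icc 0 t₀ ×ˢ Icc x₁ x₂))
  have hMnn : 0 ≤ M := le_trans (norm_nonneg _)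
    (hM (t₀, x₁) ⟨⟨le_rfl.trans ht0.le, le_rfl⟩, ⟨le_rfl, hx₁₂.le⟩⟩)
  have hGcont : ContinuousWithinAt
      (fun t => ∫ y in x₁..x₂, v t y * Psi x₁ x₂ ((1-t)⁻¹) y) (Iio t₀) t₀ := by
    apply intervalIntegral.continuousWithinAt_of_dominated_interval
      (bound := fun y => M * (|Phi'' x₁ x₂ y| / 2 + |Phi x₁ x₂ y + y * Phi' x₁ x₂ y| * c₀))
    · filter_upwards [self_mem_nhdsWithin, hmem] with t ht ht'
      have htm : t ∈ Ico (0:ℝ) 1 := ⟨by linarith [ht'.1], by linarith [ht'.2]⟩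
      have hyb : ∀ y ∈ Icc x₁ x₂, y < b t := fun y hy =>
        lt_of_le_of_lt hy.2 (hx₂b t ⟨by linarith [ht'.1], ht'.2⟩)
      refine ContinuousOn.aestronglyMeasurable ?_ measurableSet_uIoc
      intro y hy
      rw [uIoc_of_le hx₁₂.le] at hy
      exact (((hvx t y htm (hyb y ⟨hy.1.le, hy.2⟩)).continuousAt).continuousWithinAt).mul
        ((continuous_Psi x₁ x₂ ((1-t)⁻¹)).continuousWithinAt)
    · filter_upwards [hmem] with t ht
      refine ae_of_all _ (fun y hy => ?_)
      rw [uIoc_of_le hx₁₂.le] at hy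
      have h1t : (0:ℝ) < 1 - t := by linarith [ht.2]
      have hcle : (1-t)⁻¹ ≤ c₀ := by
        rw [hc₀def]
        exact inv_anti₀ h1t₀ (by linarith [ht.2])
      have hcnn : (0:ℝ) ≤ (1-t)⁻¹ := by positivity
      have hvb : |v t y| ≤ M := hM (t, y)
        ⟨⟨by linarith [ht.1], ht.2.le⟩, ⟨hy.1.le, hy.2⟩⟩
      have hpsib : |Psi x₁ x₂ ((1-t)⁻¹) y|
          ≤ |Phi'' x₁ x₂ y| / 2 + |Phi x₁ x₂ y + y * Phi' x₁ x₂ y| * c₀ := by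
        unfold Psi
        refine le_trans (abs_add_le _ _) ?_
        gcongr
        · rw [abs_div]; simp
        · rw [abs_mul, abs_of_nonneg hcnn]
          exact mul_le_mul_of_nonneg_left hcle (abs_nonneg _)
      calc ‖v t y * Psi x₁ x₂ ((1-t)⁻¹) y‖
          = |v t y| * |Psi x₁ x₂ ((1-t)⁻¹) y| := abs_mul _ _
        _ ≤ M * (|Phi'' x₁ x₂ y| / 2 + |Phi x₁ x₂ y + y * Phi' x₁ x₂ y| * c₀) :=
            mul_le_mul hvb hpsib (abs_nonneg _) hMnn
    · apply Continuous.intervalIntegrable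
      have h1 := continuous_Phi x₁ x₂
      have h2 := continuous_Phi' x₁ x₂
      have h3 := continuous_Phi'' x₁ x₂
      fun_prop
    · refine ae_of_all _ (fun y hy => ?_)
      apply ContinuousWithinAt.mul
      · have hv₀ : ContinuousWithinAt (fun p : ℝ × ℝ => v p.1 p.2)
            (Ico 0 1 ×ˢ univ) (t₀, y) := hv_cont _ ⟨ht₀m, mem_univ _⟩
        have htend : Tendsto (fun t : ℝ => ((t : ℝ), y)) (𝓝[Iio t₀] t₀)
            (𝓝[Ico 0 1 ×ˢ univ] (t₀, y)) := by
          rw [tendsto_nhdsWithin_iff]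
          constructor
          · exact ((continuous_id.prodMk continuous_const).tendsto t₀).mono_left
              nhdsWithin_le_nhds
          · filter_upwards [hmem] with t ht
            exact ⟨⟨by linarith [ht.1], by linarith [ht.2]⟩, mem_univ _⟩
        exact hv₀.tendsto.comp htend
      · have hinv : ContinuousAt (fun t : ℝ => (1 - t)⁻¹) t₀ :=
          ContinuousAt.inv₀ (by fun_prop) (ne_of_gt h1t₀)
        have : ContinuousAt (fun t : ℝ => Psi x₁ x₂ ((1-t)⁻¹) y) t₀ := by
          unfold Psi
          exact continuousAt_const.add (continuousAt_const.mul hinv)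
        exact this.continuousWithinAt
  have hGt₀ : 0 ≤ ∫ y in x₁..x₂, v t₀ y * Psi x₁ x₂ c₀ y := by
    have hne : (𝓝[Iio t₀] t₀).NeBot := nhdsLT_neBot t₀
    refine ge_of_tendsto hGcont ?_
    filter_upwards [hmem] with t ht
    exact stepA t ⟨by linarith [ht.1], ht.2⟩
  -- Step C: at `t₀` the value function equals `exp` on the gap
  have hCeq : (∫ y in x₁..x₂, v t₀ y * Psi x₁ x₂ c₀ y)
      = ∫ y in x₁..x₂, Real.exp y * Psi x₁ x₂ c₀ y := by
    apply intervalIntegral.integral_congr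
    intro y hy
    rw [uIcc_of_le hx₁₂.le] at hy
    show v t₀ y * Psi x₁ x₂ c₀ y = Real.exp y * Psi x₁ x₂ c₀ y
    rw [hstop t₀ y ht₀m (le_trans hbx₁.le hy.1)]
  -- Step D: integration by parts at `t₀`
  have hD : (∫ y in x₁..x₂, (Real.exp y * Psi x₁ x₂ c₀ y
      + Real.exp y * (y * c₀ - 1/2) * Phi x₁ x₂ y)) = 0 := by
    have hder : ∀ y ∈ uIcc x₁ x₂, HasDerivAt
        (fun y => Real.exp y * (Phi' x₁ x₂ y / 2 - Phi x₁ x₂ y / 2 + y * Phi x₁ x₂ y * c₀))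
        (Real.exp y * Psi x₁ x₂ c₀ y + Real.exp y * (y * c₀ - 1/2) * Phi x₁ x₂ y) y := by
      intro y _
      have h0 : HasDerivAt
          (fun y : ℝ => Phi' x₁ x₂ y / 2 - Phi x₁ x₂ y / 2 + y * Phi x₁ x₂ y * c₀)
          (Phi'' x₁ x₂ y / 2 - Phi' x₁ x₂ y / 2
            + (1 * Phi x₁ x₂ y + y * Phi' x₁ x₂ y) * c₀) y :=
        ((((hasDerivAt_Phi' x₁ x₂ y).div_const 2).sub
          ((hasDerivAt_Phi x₁ x₂ y).div_const 2)).add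
          (((hasDerivAt_id y).mul (hasDerivAt_Phi x₁ x₂ y)).mul_const c₀))
      have h := (Real.hasDerivAt_exp y).mul h0
      rw [show Real.exp y * Psi x₁ x₂ c₀ y + Real.exp y * (y * c₀ - 1/2) * Phi x₁ x₂ y
          = Real.exp y * (Phi' x₁ x₂ y / 2 - Phi x₁ x₂ y / 2 + y * Phi x₁ x₂ y * c₀)
            + Real.exp y * (Phi'' x₁ x₂ y / 2 - Phi' x₁ x₂ y / 2
              + (1 * Phi x₁ x₂ y + y * Phi' x₁ x₂ y) * c₀) by unfold Psi; ring]
      exact h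
    have hint : IntervalIntegrable (fun y => Real.exp y * Psi x₁ x₂ c₀ y
        + Real.exp y * (y * c₀ - 1/2) * Phi x₁ x₂ y) volume x₁ x₂ := by
      apply Continuous.intervalIntegrable
      have h1 := continuous_Psi x₁ x₂ c₀
      have h2 := continuous_Phi x₁ x₂
      fun_prop
    rw [intervalIntegral.integral_eq_sub_of_hasDerivAt hder hint]
    simp
  -- Step E: strict positivity of the error integral
  have hE : 0 < ∫ y in x₁..x₂, Real.exp y * (y * c₀ - 1/2) * Phi x₁ x₂ y := by
    apply intervalIntegral.intervalIntegral_pos_of_pos_on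
    · apply Continuous.intervalIntegrable
      have h2 := continuous_Phi x₁ x₂
      fun_prop
    · intro y hy
      have hyc : 1/2 < y * c₀ := by
        have h1 : (1 - t₀)/2 * c₀ < y * c₀ :=
          mul_lt_mul_of_pos_right (lt_trans hlow hy.1) hc₀pos
        have h2 : (1 - t₀)/2 * c₀ = 1/2 := by
          rw [hc₀def]; field_simp
        linarith
      have hP := Phi_pos hy.1 hy.2
      exact mul_pos (mul_pos (Real.exp_pos y) (by linarith)) hP
    · exact hx₁₂
  -- combine everything
  have hint1 : IntervalIntegrable (fun y => Real.exp y * Psi x₁ x₂ c₀ y) volume x₁ x₂ := by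
    apply Continuous.intervalIntegrable
    have h1 := continuous_Psi x₁ x₂ c₀
    fun_prop
  have hint2 : IntervalIntegrable (fun y => Real.exp y * (y * c₀ - 1/2) * Phi x₁ x₂ y)
      volume x₁ x₂ := by
    apply Continuous.intervalIntegrable
    have h2 := continuous_Phi x₁ x₂
    fun_prop
  rw [intervalIntegral.integral_add hint1 hint2] at hD
  rw [hCeq] at hGt₀
  linarith

end
end
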